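/- arXiv:2402.02702 — 6 statements merged into one kernel-verified Lean document; each statement's English description precedes it below -/
import Mathlib

section
/- Identification of the treated counterfactual mean in the target population (Theorem 1, Scenario 1): under conditions (A1)–(A6), E[Y¹ | S = 0] = E[ (μ₁₁(X)/μ₁₀(X)) · Y | S = 0 ]. -/
open MeasureTheory

/-- `m` is a version of the conditional expectation `E[Z ∣ X; B]`:
`E[Z·h(X)·1_B] = E[m(X)·h(X)·1_B]` for every bounded measurable `h : E → ℝ`. -/
def IsVersion {Ω E : Type*} [MeasurableSpace Ω] [MeasurableSpace E]
    (P : Measure Ω) (X : Ω → E) (Z : Ω → ℝ) (B : Set Ω) (m : E → ℝ) : Prop :=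
  Measurable m ∧
    ∀ h : E → ℝ, Measurable h → (∃ C, ∀ x, |h x| ≤ C) →
      ∫ ω in B, Z ω * h (X ω) ∂P = ∫ ω in B, m (X ω) * h (X ω) ∂P

/-- Conditional mean `E[Z ∣ B]` of a real random variable given an event `B`. -/
noncomputable def condMean {Ω : Type*} [MeasurableSpace Ω]
    (P : Measure Ω) (Z : Ω → ℝ) (B : Set Ω) : ℝ :=
  (∫ ω in B, Z ω ∂P) / (P B).toReal

/-- Theorem 1 (Scenario 1): identification of the treated counterfactual mean in the
target population under (A1)–(A6):
`E[Y¹ ∣ S = 0] = E[(μ₁₁(X)/μ₁₀(X))·Y ∣ S = 0]`. -/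
theorem treated_mean_identification_scenario1
    {Ω E : Type*} [MeasurableSpace Ω] [MeasurableSpace E]
    (P : Measure Ω) [IsProbabilityMeasure P]
    (X : Ω → E) (S A Y Y0 Y1 : Ω → ℝ)
    (hX : Measurable X) (hS : Measurable S) (hA : Measurable A) (hY : Measurable Y)
    (hS01 : ∀ ω, S ω = 0 ∨ S ω = 1) (hA01 : ∀ ω, A ω = 0 ∨ A ω = 1)
    (hPS0 : 0 < P {ω | S ω = 0})
    (hPS1A1 : 0 < P {ω | S ω = 1 ∧ A ω = 1})
    (hPS1A0 : 0 < P {ω | S ω = 1 ∧ A ω = 0})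
    (hYint : Integrable Y P) (hY0int : Integrable Y0 P) (hY1int : Integrable Y1 P)
    -- the fixed versions `g` (of `E[1{S=1} ∣ X]`, note `1{S=1} = S`) and `q` (of `E[A ∣ X; S=1]`)
    (g q μ11 μ10 ρ0 ρ1 : E → ℝ)
    (hg : IsVersion P X S Set.univ g)
    (hg01 : ∀ᵐ ω ∂P, 0 < g (X ω) ∧ g (X ω) < 1)
    (hq : IsVersion P X A {ω | S ω = 1} q)
    -- (A1) consistency
    (hA1 : ∀ᵐ ω ∂P, Y ω = A ω * Y1 ω + (1 - A ω) * Y0 ω)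
    -- (A2) exchangeability over A in the trial
    (hμ11obs : IsVersion P X Y {ω | S ω = 1 ∧ A ω = 1} μ11)
    (hμ11cf : IsVersion P X Y1 {ω | S ω = 1} μ11)
    (hμ10obs : IsVersion P X Y {ω | S ω = 1 ∧ A ω = 0} μ10)
    (hμ10cf : IsVersion P X Y0 {ω | S ω = 1} μ10)
    -- (A3) positivity of treatment assignment in the trial
    (hA3 : ∀ᵐ ω ∂P, S ω = 1 → 0 < q (X ω) ∧ q (X ω) < 1)
    -- (A4) conditional transportability of relative effect measures
    (hρ0 : IsVersion P X Y0 {ω | S ω = 0} ρ0)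
    (hρ1 : IsVersion P X Y1 {ω | S ω = 0} ρ1)
    (hA4 : ∀ᵐ ω ∂P, S ω = 0 →
      μ10 (X ω) ≠ 0 ∧ ρ0 (X ω) ≠ 0 ∧
        μ11 (X ω) / μ10 (X ω) = ρ1 (X ω) / ρ0 (X ω))
    -- (A5) positivity of trial participation
    (hA5 : ∀ᵐ ω ∂P, 0 < g (X ω))
    -- (A6) uniform use of the control treatment in the target population
    (hA6 : ∀ᵐ ω ∂P, S ω = 0 → A ω = 0)
    -- integrability of the expression inside the identifying expectation
    (hint : Integrable (fun ω => μ11 (X ω) / μ10 (X ω) * Y ω) P) :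
    condMean P Y1 {ω | S ω = 0}
      = condMean P (fun ω => μ11 (X ω) / μ10 (X ω) * Y ω) {ω | S ω = 0} := by

  classical
  have hB0m : MeasurableSet {ω | S ω = 0} := hS (measurableSet_singleton 0)
  have hμ11m : Measurable μ11 := hμ11obs.1
  have hμ10m : Measurable μ10 := hμ10obs.1
  have hρ0m : Measurable ρ0 := hρ0.1
  set r : E → ℝ := fun x => μ11 x / μ10 x with hrdef
  have hrm : Measurable r := hμ11m.div hμ10m
  -- a.e. on {S = 0}, Y = Y0
  have hmem : ∀ᵐ ω ∂P.restrict {ω | S ω = 0}, ω ∈ {ω | S ω = 0} := ae_restrict_mem hB0m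
  have hYY0 : (fun ω => Y ω) =ᶠ[ae (P.restrict {ω | S ω = 0})] fun ω => Y0 ω := by
    filter_upwards [ae_restrict_of_ae hA1, ae_restrict_of_ae hA6, hmem] with ω h1 h6 hm
    have hA0 : A ω = 0 := h6 hm
    simp [h1, hA0]
  -- truncation sets and test functions
  set C : ℕ → Set E := fun n => {x | |r x| ≤ (n : ℝ) ∧ |ρ0 x| ≤ (n : ℝ)} with hCdef
  have hCm : ∀ n, MeasurableSet (C n) := by
    intro n
    exact (measurableSet_le hrm.abs measurable_const).inter
      (measurableSet_le hρ0m.abs measurable_const)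
  set h : ℕ → E → ℝ := fun n x => if x ∈ C n then r x else 0 with hhdef
  set χ : ℕ → E → ℝ := fun n x => if x ∈ C n then 1 else 0 with hχdef
  have hhm : ∀ n, Measurable (h n) := fun n => Measurable.ite (hCm n) hrm measurable_const
  have hχm : ∀ n, Measurable (χ n) := fun n =>
    Measurable.ite (hCm n) measurable_const measurable_const
  have hhbd : ∀ n, ∃ Cb, ∀ x, |h n x| ≤ Cb := by
    intro n
    refine ⟨n, fun x => ?_⟩
    by_cases hx : x ∈ C n
    · simpa [h, hx] using hx.1
    · simp [h, hx]
  have hχbd : ∀ n, ∃ Cb, ∀ x, |χ n x| ≤ Cb := by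
    intro n
    refine ⟨1, fun x => ?_⟩
    by_cases hx : x ∈ C n <;> simp [χ, hx]
  have hhler : ∀ n x, |h n x| ≤ |r x| := by
    intro n x
    by_cases hx : x ∈ C n <;> simp [h, hx, abs_nonneg]
  -- step (ii): version property of ρ0
  have step2 : ∀ n, ∫ ω in {ω | S ω = 0}, Y0 ω * h n (X ω) ∂P
      = ∫ ω in {ω | S ω = 0}, ρ0 (X ω) * h n (X ω) ∂P :=
    fun n => hρ0.2 (h n) (hhm n) (hhbd n)
  -- step (iii): a.e. on {S=0}, ρ0(X) * hₙ(X) = ρ1(X) * χₙ(X)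
  have step3 : ∀ n, ∫ ω in {ω | S ω = 0}, ρ0 (X ω) * h n (X ω) ∂P
      = ∫ ω in {ω | S ω = 0}, ρ1 (X ω) * χ n (X ω) ∂P := by
    intro n
    refine integral_congr_ae ?_
    filter_upwards [ae_restrict_of_ae hA4, hmem] with ω h4 hm
    obtain ⟨h10, hρ0ne, heq⟩ := h4 hm
    by_cases hx : X ω ∈ C n
    · have : ρ0 (X ω) * r (X ω) = ρ1 (X ω) := by
        rw [hrdef]
        field_simp
        rw [div_eq_div_iff h10 hρ0ne] at heq
        linarith [heq]
      simp [h, χ, hx, this]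
    · simp [h, χ, hx]
  -- step (iv): version property of ρ1
  have step4 : ∀ n, ∫ ω in {ω | S ω = 0}, Y1 ω * χ n (X ω) ∂P
      = ∫ ω in {ω | S ω = 0}, ρ1 (X ω) * χ n (X ω) ∂P :=
    fun n => hρ1.2 (χ n) (hχm n) (hχbd n)
  have keyn : ∀ n, ∫ ω in {ω | S ω = 0}, Y0 ω * h n (X ω) ∂P
      = ∫ ω in {ω | S ω = 0}, Y1 ω * χ n (X ω) ∂P := by
    intro n; rw [step2 n, step3 n, ← step4 n]
  -- integrable dominating function
  have hintr0 : Integrable (fun ω => r (X ω) * Y0 ω) (P.restrict {ω | S ω = 0}) := by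
    refine (hint.restrict (s := {ω | S ω = 0})).congr ?_
    filter_upwards [hYY0] with ω hω
    simp [hω, hrdef]
  -- step (v): limit of the left side
  have limL : Filter.Tendsto (fun n => ∫ ω in {ω | S ω = 0}, Y0 ω * h n (X ω) ∂P)
      Filter.atTop (nhds (∫ ω in {ω | S ω = 0}, Y0 ω * r (X ω) ∂P)) := by
    refine MeasureTheory.tendsto_integral_of_dominated_convergence
      (fun ω => |r (X ω) * Y0 ω|)
      (fun n => (hY0int.1.restrict.mul ((hhm n).comp hX).aestronglyMeasurable.restrict))
      hintr0.abs ?_ ?_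
    · intro n
      refine Filter.Eventually.of_forall fun ω => ?_
      have := hhler n (X ω)
      have : |Y0 ω * h n (X ω)| ≤ |r (X ω) * Y0 ω| := by
        rw [abs_mul, abs_mul, mul_comm |r (X ω)| _]
        exact mul_le_mul_of_nonneg_left this (abs_nonneg _)
      simpa only [Real.norm_eq_abs] using this
    · refine Filter.Eventually.of_forall fun ω => ?_
      obtain ⟨N, hN⟩ := exists_nat_ge (max |r (X ω)| |ρ0 (X ω)|)
      refine Filter.Tendsto.congr' ?_ tendsto_const_nhds
      refine Filter.eventually_atTop.2 ⟨N, fun n hn => ?_⟩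
      have hmem : X ω ∈ C n := by
        constructor
        · exact le_trans (le_trans (le_max_left _ _) hN) (Nat.cast_le.2 hn)
        · exact le_trans (le_trans (le_max_right _ _) hN) (Nat.cast_le.2 hn)
      simp [h, hmem]
  -- step (vi): limit of the right side
  have limR : Filter.Tendsto (fun n => ∫ ω in {ω | S ω = 0}, Y1 ω * χ n (X ω) ∂P)
      Filter.atTop (nhds (∫ ω in {ω | S ω = 0}, Y1 ω ∂P)) := by
    refine MeasureTheory.tendsto_integral_of_dominated_convergence
      (fun ω => |Y1 ω|)
      (fun n => (hY1int.1.restrict.mul ((hχm n).comp hX).aestronglyMeasurable.restrict))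
      hY1int.restrict.abs ?_ ?_
    · intro n
      refine Filter.Eventually.of_forall fun ω => ?_
      by_cases hx : X ω ∈ C n <;> simp [χ, hx, Real.norm_eq_abs, abs_nonneg, abs_mul, abs_nonneg]
    · refine Filter.Eventually.of_forall fun ω => ?_
      obtain ⟨N, hN⟩ := exists_nat_ge (max |r (X ω)| |ρ0 (X ω)|)
      refine Filter.Tendsto.congr' ?_ tendsto_const_nhds
      refine Filter.eventually_atTop.2 ⟨N, fun n hn => ?_⟩
      have hmem : X ω ∈ C n := by
        constructor
        · exact le_trans (le_trans (le_max_left _ _) hN) (Nat.cast_le.2 hn)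
        · exact le_trans (le_trans (le_max_right _ _) hN) (Nat.cast_le.2 hn)
      simp [χ, hmem]
  have hmain : ∫ ω in {ω | S ω = 0}, Y0 ω * r (X ω) ∂P
      = ∫ ω in {ω | S ω = 0}, Y1 ω ∂P := by
    refine tendsto_nhds_unique ?_ limR
    exact limL.congr keyn
  have hfinal : ∫ ω in {ω | S ω = 0}, Y1 ω ∂P
      = ∫ ω in {ω | S ω = 0}, r (X ω) * Y ω ∂P := by
    rw [← hmain]
    refine integral_congr_ae ?_
    filter_upwards [hYY0] with ω hω
    rw [hω]; ring
  simp only [condMean]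
  rw [hfinal]
end

section
/- Identification of the control counterfactual mean and of the contrasts (Theorem 1): under conditions (A1) and (A6), E[Y⁰ | S = 0] = E[Y | S = 0]. Consequently, under conditions (A1)–(A6), writing α₁ := E[(μ₁₁(X)/μ₁₀(X))·Y | S = 0] and β₁ := E[Y | S = 0], one has E[Y¹ − Y⁰ | S = 0] = α₁ − β₁, and if β₁ ≠ 0 then E[Y¹ | S = 0] / E[Y⁰ | S = 0] = α₁/β₁. -/
open MeasureTheory Filter Topology

private lemma clamp_abs_le (c : ℝ) (n : ℕ) : |max (-(n : ℝ)) (min c n)| ≤ |c| := by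
  rw [abs_le]
  constructor
  · exact le_max_of_le_right
      (le_min (neg_abs_le c) ((neg_nonpos.mpr (abs_nonneg c)).trans (Nat.cast_nonneg n)))
  · exact max_le ((neg_nonpos.mpr (Nat.cast_nonneg n)).trans (abs_nonneg c))
      ((min_le_left _ _).trans (le_abs_self c))

private lemma tendsto_clamp (c : ℝ) :
    Tendsto (fun n : ℕ => max (-(n : ℝ)) (min c n)) atTop (nhds c) := by
  have h : (fun n : ℕ => max (-(n : ℝ)) (min c n)) =ᶠ[atTop] fun _ => c := by
    filter_upwards [eventually_ge_atTop ⌈|c|⌉₊] with n hn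
    have h1 : |c| ≤ (n : ℝ) := (Nat.le_ceil _).trans (by exact_mod_cast hn)
    obtain ⟨hl, hr⟩ := abs_le.mp h1
    rw [min_eq_left hr, max_eq_right hl]
  exact Tendsto.congr' h.symm tendsto_const_nhds

/-- Extension of the version property from bounded test functions to integrable ones. -/
private lemma isVersion_ext {Ω E : Type*} [MeasurableSpace Ω] [MeasurableSpace E]
    {P : Measure Ω} {X : Ω → E} {Z : Ω → ℝ} {B : Set Ω} {m : E → ℝ}
    (hX : Measurable X) (hv : IsVersion P X Z B m) {f : E → ℝ} (hf : Measurable f)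
    (hZ : AEStronglyMeasurable Z (P.restrict B))
    (h1 : Integrable (fun ω => Z ω * f (X ω)) (P.restrict B))
    (h2 : Integrable (fun ω => m (X ω) * f (X ω)) (P.restrict B)) :
    ∫ ω in B, Z ω * f (X ω) ∂P = ∫ ω in B, m (X ω) * f (X ω) ∂P := by
  set h : ℕ → E → ℝ := fun n x => max (-(n : ℝ)) (min (f x) n) with hh
  have hhm : ∀ n, Measurable (h n) := fun n =>
    Measurable.max measurable_const (hf.min measurable_const)
  have hhb : ∀ n : ℕ, ∀ x, |h n x| ≤ (n : ℝ) := by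
    intro n x
    rw [abs_le]
    exact ⟨le_max_left _ _, max_le (neg_le_self (Nat.cast_nonneg n)) (min_le_right _ _)⟩
  have heq : ∀ n, ∫ ω in B, Z ω * h n (X ω) ∂P = ∫ ω in B, m (X ω) * h n (X ω) ∂P :=
    fun n => hv.2 (h n) (hhm n) ⟨n, hhb n⟩
  have t1 : Tendsto (fun n => ∫ ω in B, Z ω * h n (X ω) ∂P) atTop
      (nhds (∫ ω in B, Z ω * f (X ω) ∂P)) := by
    apply tendsto_integral_of_dominated_convergence (fun ω => |Z ω * f (X ω)|)
    · exact fun n => hZ.mul ((hhm n).comp hX).aestronglyMeasurable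
    · exact h1.abs
    · intro n
      filter_upwards with ω
      rw [Real.norm_eq_abs, abs_mul, abs_mul]
      exact mul_le_mul_of_nonneg_left (clamp_abs_le _ _) (abs_nonneg _)
    · filter_upwards with ω
      exact (tendsto_clamp (f (X ω))).const_mul _
  have t2 : Tendsto (fun n => ∫ ω in B, m (X ω) * h n (X ω) ∂P) atTop
      (nhds (∫ ω in B, m (X ω) * f (X ω) ∂P)) := by
    apply tendsto_integral_of_dominated_convergence (fun ω => |m (X ω) * f (X ω)|)
    · exact fun n => ((hv.1.comp hX).mul ((hhm n).comp hX)).aestronglyMeasurable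
    · exact h2.abs
    · intro n
      filter_upwards with ω
      rw [Real.norm_eq_abs, abs_mul, abs_mul]
      exact mul_le_mul_of_nonneg_left (clamp_abs_le _ _) (abs_nonneg _)
    · filter_upwards with ω
      exact (tendsto_clamp (f (X ω))).const_mul _
  exact tendsto_nhds_unique (t1.congr fun n => heq n) t2

/-- A version of `E[Z ∣ X; B]` with `Z` integrable is itself integrable on `B`. -/
private lemma isVersion_integrable {Ω E : Type*} [MeasurableSpace Ω] [MeasurableSpace E]
    {P : Measure Ω} [IsFiniteMeasure P] {X : Ω → E} {Z : Ω → ℝ} {B : Set Ω} {m : E → ℝ}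
    (hB : MeasurableSet B) (hX : Measurable X)
    (hv : IsVersion P X Z B m) (hZ : Integrable Z P) :
    Integrable (fun ω => m (X ω)) (P.restrict B) := by
  have hm := hv.1
  set h : ℕ → E → ℝ :=
    fun n x => if |m x| ≤ (n : ℝ) then (if 0 ≤ m x then 1 else -1) else 0 with hh
  have hset : ∀ n : ℕ, MeasurableSet {x | |m x| ≤ (n : ℝ)} :=
    fun n => measurableSet_le hm.abs measurable_const
  have hset0 : MeasurableSet {x | 0 ≤ m x} := measurableSet_le measurable_const hm
  have hhm : ∀ n, Measurable (h n) := fun n =>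
    Measurable.ite (hset n) (Measurable.ite hset0 measurable_const measurable_const)
      measurable_const
  have hhb : ∀ n : ℕ, ∀ x, |h n x| ≤ 1 := by
    intro n x
    simp only [hh]
    split_ifs <;> simp
  have hmul : ∀ (n : ℕ) x, m x * h n x = if |m x| ≤ (n : ℝ) then |m x| else 0 := by
    intro n x
    simp only [hh]
    split_ifs with h1 h2
    · rw [mul_one, abs_of_nonneg h2]
    · rw [abs_of_neg (lt_of_not_ge h2)]; ring
    · ring
  set C := ∫ ω, |Z ω| ∂P with hC
  have hCnn : 0 ≤ C := integral_nonneg fun ω => abs_nonneg _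
  have hG : ∀ n : ℕ, Integrable
      (fun ω => if |m (X ω)| ≤ (n : ℝ) then |m (X ω)| else 0) (P.restrict B) := by
    intro n
    have hmeas : Measurable (fun ω => if |m (X ω)| ≤ (n : ℝ) then |m (X ω)| else 0) :=
      Measurable.ite (measurableSet_le (hm.comp hX).abs measurable_const)
        (hm.comp hX).abs measurable_const
    refine (integrable_const (n : ℝ)).mono' hmeas.aestronglyMeasurable ?_
    filter_upwards with ω
    rw [Real.norm_eq_abs]
    split_ifs with hc
    · rwa [abs_abs]
    · simpa using Nat.cast_nonneg n
  have hbound : ∀ n : ℕ,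
      ∫ ω in B, (if |m (X ω)| ≤ (n : ℝ) then |m (X ω)| else 0) ∂P ≤ C := by
    intro n
    have e2 : ∫ ω in B, (if |m (X ω)| ≤ (n : ℝ) then |m (X ω)| else 0) ∂P
        = ∫ ω in B, Z ω * h n (X ω) ∂P := by
      rw [hv.2 (h n) (hhm n) ⟨1, hhb n⟩]
      exact integral_congr_ae (Eventually.of_forall fun ω => (hmul n (X ω)).symm)
    rw [e2]
    have hZh : Integrable (fun ω => Z ω * h n (X ω)) (P.restrict B) := by
      have := (hZ.restrict (s := B)).bdd_mul
        ((hhm n).comp hX).aestronglyMeasurable (c := 1) (Eventually.of_forall fun x => by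
          rw [Real.norm_eq_abs]; exact hhb n (X x))
      simpa [mul_comm] using this
    calc ∫ ω in B, Z ω * h n (X ω) ∂P
        ≤ ∫ ω in B, |Z ω| ∂P := by
          apply integral_mono hZh (hZ.abs.restrict (s := B))
          intro ω
          calc Z ω * h n (X ω) ≤ |Z ω * h n (X ω)| := le_abs_self _
            _ = |Z ω| * |h n (X ω)| := abs_mul _ _
            _ ≤ |Z ω| * 1 := mul_le_mul_of_nonneg_left (hhb n (X ω)) (abs_nonneg _)
            _ = |Z ω| := mul_one _
      _ ≤ C := by
          rw [hC]
          exact setIntegral_le_integral hZ.abs (Eventually.of_forall fun ω => abs_nonneg _)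
  -- monotone convergence
  set F : ℕ → Ω → ENNReal :=
    fun n ω => ENNReal.ofReal (if |m (X ω)| ≤ (n : ℝ) then |m (X ω)| else 0) with hF
  have hFm : ∀ n, Measurable (F n) := fun n =>
    ENNReal.measurable_ofReal.comp
      (Measurable.ite (measurableSet_le (hm.comp hX).abs measurable_const)
        (hm.comp hX).abs measurable_const)
  have hFmono : Monotone F := by
    intro a b hab ω
    simp only [hF]
    apply ENNReal.ofReal_le_ofReal
    split_ifs with h1 h2
    · exact le_refl _
    · exact absurd (h1.trans (by exact_mod_cast hab)) h2
    · exact abs_nonneg _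
    · exact le_refl _
  have hsup : ∀ ω, (⨆ n, F n ω) = ENNReal.ofReal |m (X ω)| := by
    intro ω
    apply le_antisymm
    · refine iSup_le fun n => ENNReal.ofReal_le_ofReal ?_
      split_ifs
      · exact le_refl _
      · exact abs_nonneg _
    · refine le_trans (le_of_eq ?_) (le_iSup _ ⌈|m (X ω)|⌉₊)
      simp only [hF]
      rw [if_pos (Nat.le_ceil _)]
  have key : ∫⁻ ω in B, ENNReal.ofReal |m (X ω)| ∂P ≤ ENNReal.ofReal C := by
    calc ∫⁻ ω in B, ENNReal.ofReal |m (X ω)| ∂P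
        = ∫⁻ ω in B, ⨆ n, F n ω ∂P := by simp_rw [hsup]
      _ = ⨆ n, ∫⁻ ω in B, F n ω ∂P := lintegral_iSup hFm hFmono
      _ ≤ ENNReal.ofReal C := by
          refine iSup_le fun n => ?_
          have := ofReal_integral_eq_lintegral_ofReal (hG n)
            (Eventually.of_forall fun ω => by positivity)
          rw [← this]
          exact ENNReal.ofReal_le_ofReal (hbound n)
  refine ⟨(hm.comp hX).aestronglyMeasurable, ?_⟩
  rw [hasFiniteIntegral_iff_norm]
  simp_rw [Real.norm_eq_abs]
  exact lt_of_le_of_lt key ENNReal.ofReal_lt_top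

/-- Theorem 1, control mean and contrasts (Scenario 1).  Under (A1) and (A6) alone,
`E[Y⁰ ∣ S = 0] = E[Y ∣ S = 0]`; consequently, under (A1)–(A6) (the remaining conditions
appear as hypotheses of the second conjunct), with
`α₁ = E[(μ₁₁(X)/μ₁₀(X))·Y ∣ S = 0]` and `β₁ = E[Y ∣ S = 0]`, one has
`E[Y¹ − Y⁰ ∣ S = 0] = α₁ − β₁` and, if `β₁ ≠ 0`,
`E[Y¹ ∣ S = 0] / E[Y⁰ ∣ S = 0] = α₁ / β₁`. -/
theorem control_mean_and_contrasts_scenario1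
    {Ω E : Type*} [MeasurableSpace Ω] [MeasurableSpace E]
    (P : Measure Ω) [IsProbabilityMeasure P]
    (X : Ω → E) (S A Y Y0 Y1 : Ω → ℝ)
    (hX : Measurable X) (hS : Measurable S) (hA : Measurable A) (hY : Measurable Y)
    (hS01 : ∀ ω, S ω = 0 ∨ S ω = 1) (hA01 : ∀ ω, A ω = 0 ∨ A ω = 1)
    (hPS0 : 0 < P {ω | S ω = 0})
    (hPS1A1 : 0 < P {ω | S ω = 1 ∧ A ω = 1})
    (hPS1A0 : 0 < P {ω | S ω = 1 ∧ A ω = 0})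
    (hYint : Integrable Y P) (hY0int : Integrable Y0 P) (hY1int : Integrable Y1 P)
    (g q μ11 μ10 ρ0 ρ1 : E → ℝ)
    -- integrability of the expression inside the identifying expectation
    (hint : Integrable (fun ω => μ11 (X ω) / μ10 (X ω) * Y ω) P)
    -- (A1) consistency
    (hA1 : ∀ᵐ ω ∂P, Y ω = A ω * Y1 ω + (1 - A ω) * Y0 ω)
    -- (A6) uniform use of the control treatment in the target population
    (hA6 : ∀ᵐ ω ∂P, S ω = 0 → A ω = 0) :
    -- under (A1) and (A6):
    condMean P Y0 {ω | S ω = 0} = condMean P Y {ω | S ω = 0} ∧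
    -- under the remaining conditions (A2)–(A5) together with the fixed versions g, q:
    (IsVersion P X S Set.univ g →
     (∀ᵐ ω ∂P, 0 < g (X ω) ∧ g (X ω) < 1) →
     IsVersion P X A {ω | S ω = 1} q →
     -- (A2)
     IsVersion P X Y {ω | S ω = 1 ∧ A ω = 1} μ11 →
     IsVersion P X Y1 {ω | S ω = 1} μ11 →
     IsVersion P X Y {ω | S ω = 1 ∧ A ω = 0} μ10 →
     IsVersion P X Y0 {ω | S ω = 1} μ10 →
     -- (A3)
     (∀ᵐ ω ∂P, S ω = 1 → 0 < q (X ω) ∧ q (X ω) < 1) →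
     -- (A4)
     IsVersion P X Y0 {ω | S ω = 0} ρ0 →
     IsVersion P X Y1 {ω | S ω = 0} ρ1 →
     (∀ᵐ ω ∂P, S ω = 0 →
       μ10 (X ω) ≠ 0 ∧ ρ0 (X ω) ≠ 0 ∧
         μ11 (X ω) / μ10 (X ω) = ρ1 (X ω) / ρ0 (X ω)) →
     -- (A5)
     (∀ᵐ ω ∂P, 0 < g (X ω)) →
     (condMean P (fun ω => Y1 ω - Y0 ω) {ω | S ω = 0}
        = condMean P (fun ω => μ11 (X ω) / μ10 (X ω) * Y ω) {ω | S ω = 0}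
          - condMean P Y {ω | S ω = 0} ∧
      (condMean P Y {ω | S ω = 0} ≠ 0 →
        condMean P Y1 {ω | S ω = 0} / condMean P Y0 {ω | S ω = 0}
          = condMean P (fun ω => μ11 (X ω) / μ10 (X ω) * Y ω) {ω | S ω = 0}
            / condMean P Y {ω | S ω = 0}))) := by
  set B := {ω | S ω = 0} with hBdef
  have hB : MeasurableSet B := hS (measurableSet_singleton 0)
  have hmemB : ∀ᵐ ω ∂(P.restrict B), S ω = 0 := ae_restrict_mem hB
  have hYY0 : ∀ᵐ ω ∂(P.restrict B), Y ω = Y0 ω := by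
    filter_upwards [hmemB, ae_restrict_of_ae hA1, ae_restrict_of_ae hA6] with ω h0 h1 h6
    rw [h1, h6 h0]
    ring
  have part1int : ∫ ω in B, Y0 ω ∂P = ∫ ω in B, Y ω ∂P :=
    integral_congr_ae (hYY0.mono fun ω h => h.symm)
  have part1 : condMean P Y0 B = condMean P Y B := by
    unfold condMean
    rw [part1int]
  refine ⟨part1, ?_⟩
  intro hg hg01 hq hμ11a hμ11b hμ10a hμ10b hA3 hρ0 hρ1 hA4 hA5
  have hA4' : ∀ᵐ ω ∂(P.restrict B), μ10 (X ω) ≠ 0 ∧ ρ0 (X ω) ≠ 0 ∧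
      μ11 (X ω) / μ10 (X ω) = ρ1 (X ω) / ρ0 (X ω) := by
    filter_upwards [hmemB, ae_restrict_of_ae hA4] with ω h0 h4
    exact h4 h0
  have hρ1int : Integrable (fun ω => ρ1 (X ω)) (P.restrict B) :=
    isVersion_integrable hB hX hρ1 hY1int
  have hfm : Measurable (fun x => ρ1 x / ρ0 x) := hρ1.1.div hρ0.1
  have h1 : Integrable (fun ω => Y0 ω * (ρ1 (X ω) / ρ0 (X ω))) (P.restrict B) := by
    apply (hint.restrict (s := B)).congr
    filter_upwards [hYY0, hA4'] with ω hy h4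
    show μ11 (X ω) / μ10 (X ω) * Y ω = Y0 ω * (ρ1 (X ω) / ρ0 (X ω))
    rw [h4.2.2, hy, mul_comm]
  have h2 : Integrable (fun ω => ρ0 (X ω) * (ρ1 (X ω) / ρ0 (X ω))) (P.restrict B) := by
    apply hρ1int.congr
    filter_upwards [hA4'] with ω h4
    show ρ1 (X ω) = ρ0 (X ω) * (ρ1 (X ω) / ρ0 (X ω))
    rw [mul_comm]
    exact (div_mul_cancel₀ (ρ1 (X ω)) h4.2.1).symm
  have e1 : ∫ ω in B, Y1 ω ∂P = ∫ ω in B, ρ1 (X ω) ∂P := by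
    have := hρ1.2 (fun _ => 1) measurable_const ⟨1, fun x => by norm_num⟩
    simpa using this
  have e2 : ∫ ω in B, ρ1 (X ω) ∂P
      = ∫ ω in B, ρ0 (X ω) * (ρ1 (X ω) / ρ0 (X ω)) ∂P := by
    apply integral_congr_ae
    filter_upwards [hA4'] with ω h4
    show ρ1 (X ω) = ρ0 (X ω) * (ρ1 (X ω) / ρ0 (X ω))
    rw [mul_comm]
    exact (div_mul_cancel₀ (ρ1 (X ω)) h4.2.1).symm
  have e3 : ∫ ω in B, Y0 ω * (ρ1 (X ω) / ρ0 (X ω)) ∂P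
      = ∫ ω in B, ρ0 (X ω) * (ρ1 (X ω) / ρ0 (X ω)) ∂P :=
    isVersion_ext hX hρ0 hfm (hY0int.restrict (s := B)).aestronglyMeasurable h1 h2
  have e4 : ∫ ω in B, Y0 ω * (ρ1 (X ω) / ρ0 (X ω)) ∂P
      = ∫ ω in B, μ11 (X ω) / μ10 (X ω) * Y ω ∂P := by
    apply integral_congr_ae
    filter_upwards [hYY0, hA4'] with ω hy h4
    show Y0 ω * (ρ1 (X ω) / ρ0 (X ω)) = μ11 (X ω) / μ10 (X ω) * Y ω
    rw [← hy, h4.2.2, mul_comm]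
  have key : ∫ ω in B, Y1 ω ∂P = ∫ ω in B, μ11 (X ω) / μ10 (X ω) * Y ω ∂P :=
    e1.trans (e2.trans (e3.symm.trans e4))
  constructor
  · unfold condMean
    rw [integral_sub (hY1int.restrict (s := B)) (hY0int.restrict (s := B)), sub_div,
      key, part1int]
  · intro _
    unfold condMean
    rw [key, part1int]
end

section
/- Alternative identification formulas for Scenario 1 (Proposition in Supplement B): under conditions (A1)–(A6), each of the following equals E[Y¹ | S = 0]: (i) E[ (μ₁₁(X)/μ₁₀(X)) · m₀(X) | S = 0 ]; (ii) P(S=0)⁻¹ · E[ τ(X) · (m₀(X)/μ₁₀(X)) · S·A·Y / q(X) ]; (iii) P(S=0)⁻¹ · E[ (μ₁₁(X)/μ₁₀(X)) · (m₀(X)/μ₁₀(X)) · τ(X) · S·(1−A)·Y / (1−q(X)) ]. -/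
open MeasureTheory

section Aux
variable {Ω E : Type*} [MeasurableSpace Ω] [MeasurableSpace E]

/-- A version of a conditional expectation of an integrable variable is integrable. -/
lemma version_integrable (ν : Measure Ω) [IsFiniteMeasure ν]
    (X : Ω → E) (Z : Ω → ℝ)
    (hZint : Integrable Z ν) (m : E → ℝ) (hm : Measurable m)
    (hver : ∀ h : E → ℝ, Measurable h → (∃ C, ∀ x, |h x| ≤ C) →
      ∫ ω, Z ω * h (X ω) ∂ν = ∫ ω, m (X ω) * h (X ω) ∂ν)
    (hX : Measurable X) :
    Integrable (fun ω => m (X ω)) ν := by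
  have hmX : Measurable fun ω => m (X ω) := hm.comp hX
  refine ⟨hmX.aestronglyMeasurable, ?_⟩
  set t : ℕ → Ω → ℝ := fun n ω => if |m (X ω)| ≤ n then |m (X ω)| else 0 with ht
  have htnonneg : ∀ n ω, 0 ≤ t n ω := by
    intro n ω
    by_cases h : |m (X ω)| ≤ n <;> simp [t, h, abs_nonneg]
  have htle : ∀ n ω, t n ω ≤ |m (X ω)| := by
    intro n ω
    by_cases h : |m (X ω)| ≤ n <;> simp [t, h, abs_nonneg]
  have htmeas : ∀ n, Measurable (t n) := fun n =>
    Measurable.ite (measurableSet_le hmX.abs measurable_const) hmX.abs measurable_const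
  have htint : ∀ n, Integrable (t n) ν := by
    intro n
    refine Integrable.mono' (integrable_const (n : ℝ)) (htmeas n).aestronglyMeasurable ?_
    filter_upwards with ω
    by_cases h : |m (X ω)| ≤ n <;> simp [t, h, abs_of_nonneg, abs_abs]
  have hmono : Monotone t := by
    refine monotone_nat_of_le_succ fun n ω => ?_
    by_cases h : |m (X ω)| ≤ n
    · have h2 : |m (X ω)| ≤ (n : ℝ) + 1 := h.trans (by linarith)
      simp [t, h, h2]
    · exact (htnonneg (n+1) ω).trans_eq' (by simp [t, h])
  have hbound : ∀ n, ∫ ω, t n ω ∂ν ≤ ∫ ω, |Z ω| ∂ν := by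
    intro n
    set h : E → ℝ := fun x => if |m x| ≤ n then (if 0 ≤ m x then 1 else -1) else 0 with hh
    have hhm : Measurable h := by
      refine Measurable.ite (measurableSet_le hm.abs measurable_const) ?_ measurable_const
      exact Measurable.ite (measurableSet_le measurable_const hm) measurable_const measurable_const
    have hhb1 : ∀ x, |h x| ≤ 1 := by
      intro x
      by_cases h1 : |m x| ≤ n <;> by_cases h2 : 0 ≤ m x <;> simp [h, h1, h2]
    have key : ∀ ω, m (X ω) * h (X ω) = t n ω := by
      intro ω
      by_cases h1 : |m (X ω)| ≤ n
      · by_cases h2 : 0 ≤ m (X ω)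
        · simp [h, t, h1, h2, abs_of_nonneg]
        · simp [h, t, h1, h2, abs_of_neg (not_le.mp h2)]
      · simp [h, t, h1]
    have hZhint : Integrable (fun ω => Z ω * h (X ω)) ν := by
      refine Integrable.mono' hZint.abs (hZint.aestronglyMeasurable.mul (hhm.comp hX).aestronglyMeasurable) ?_
      filter_upwards with ω
      rw [Real.norm_eq_abs, abs_mul]
      calc |Z ω| * |h (X ω)| ≤ |Z ω| * 1 := by
            exact mul_le_mul_of_nonneg_left (hhb1 (X ω)) (abs_nonneg _)
        _ = |Z ω| := mul_one _
    calc ∫ ω, t n ω ∂ν = ∫ ω, Z ω * h (X ω) ∂ν := by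
          rw [hver h hhm ⟨1, hhb1⟩]
          exact integral_congr_ae (Filter.Eventually.of_forall fun ω => (key ω).symm)
      _ ≤ ∫ ω, |Z ω| ∂ν := by
          refine integral_mono hZhint hZint.abs fun ω => ?_
          calc Z ω * h (X ω) ≤ |Z ω * h (X ω)| := le_abs_self _
            _ = |Z ω| * |h (X ω)| := abs_mul _ _
            _ ≤ |Z ω| * 1 := mul_le_mul_of_nonneg_left (hhb1 (X ω)) (abs_nonneg _)
            _ = |Z ω| := mul_one _
  have hsup : ∀ ω, (⨆ n, ENNReal.ofReal (t n ω)) = (‖m (X ω)‖₊ : ENNReal) := by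
    intro ω
    rw [← (ofReal_norm (m (X ω))).trans (enorm_eq_nnnorm (m (X ω))), Real.norm_eq_abs]
    refine le_antisymm (iSup_le fun n => ENNReal.ofReal_le_ofReal (htle n ω)) ?_
    obtain ⟨n, hn⟩ := exists_nat_ge (|m (X ω)|)
    refine le_iSup_of_le n (le_of_eq ?_)
    simp [t, hn]
  rw [hasFiniteIntegral_iff_norm]
  have h1 : ∫⁻ ω, ENNReal.ofReal ‖m (X ω)‖ ∂ν = ⨆ n, ∫⁻ ω, ENNReal.ofReal (t n ω) ∂ν := by
    calc ∫⁻ ω, ENNReal.ofReal ‖m (X ω)‖ ∂ν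
        = ∫⁻ ω, ⨆ n, ENNReal.ofReal (t n ω) ∂ν :=
          lintegral_congr fun ω => by rw [(ofReal_norm (m (X ω))).trans (enorm_eq_nnnorm (m (X ω))), ← hsup ω]
      _ = ⨆ n, ∫⁻ ω, ENNReal.ofReal (t n ω) ∂ν :=
          lintegral_iSup (fun n => (htmeas n).ennreal_ofReal)
            (fun i j hij ω => ENNReal.ofReal_le_ofReal (hmono hij ω))
  rw [h1]
  have h2 : (⨆ n, ∫⁻ ω, ENNReal.ofReal (t n ω) ∂ν) ≤ ENNReal.ofReal (∫ ω, |Z ω| ∂ν) := by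
    refine iSup_le fun n => ?_
    rw [← ofReal_integral_eq_lintegral_ofReal (htint n)
      (Filter.Eventually.of_forall (htnonneg n))]
    exact ENNReal.ofReal_le_ofReal (hbound n)
  exact lt_of_le_of_lt h2 ENNReal.ofReal_lt_top

/-- A version of `E[Z | X]` is a.e. equal to the conditional expectation. -/
lemma version_ae_condexp (ν : Measure Ω) [IsFiniteMeasure ν]
    (X : Ω → E) (Z : Ω → ℝ)
    (hZint : Integrable Z ν) (m : E → ℝ) (hm : Measurable m)
    (hver : ∀ h : E → ℝ, Measurable h → (∃ C, ∀ x, |h x| ≤ C) →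
      ∫ ω, Z ω * h (X ω) ∂ν = ∫ ω, m (X ω) * h (X ω) ∂ν)
    (hX : Measurable X) :
    (fun ω => m (X ω)) =ᵐ[ν] ν[Z | MeasurableSpace.comap X inferInstance] := by
  have hle : MeasurableSpace.comap X inferInstance ≤ ‹MeasurableSpace Ω› := hX.comap_le
  have hmint : Integrable (fun ω => m (X ω)) ν :=
    version_integrable ν X Z hZint m hm hver hX
  have hsf : SigmaFinite (ν.trim hle) := by
    have : IsFiniteMeasure (ν.trim hle) := ⟨by rw [trim_measurableSet_eq hle MeasurableSet.univ]; exact measure_lt_top ν _⟩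
    infer_instance
  refine ae_eq_condExp_of_forall_setIntegral_eq hle hZint
    (fun s _ _ => hmint.integrableOn) ?_ ?_
  · rintro s ⟨u, hu, rfl⟩ -
    have hind : ∀ (F : Ω → ℝ), (X ⁻¹' u).indicator F =
        fun ω => F ω * u.indicator (fun _ => (1:ℝ)) (X ω) := by
      intro F
      funext ω
      by_cases h : X ω ∈ u <;> simp [Set.indicator_of_mem, Set.indicator_of_notMem, h]
    have hb : ∃ C, ∀ x, |u.indicator (fun _ => (1:ℝ)) x| ≤ C := by
      refine ⟨1, fun x => ?_⟩
      by_cases h : x ∈ u <;> simp [h]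
    have hmeasind : Measurable (u.indicator (fun _ => (1:ℝ))) :=
      measurable_const.indicator hu
    rw [← integral_indicator (hX hu), ← integral_indicator (hX hu), hind, hind,
      ← hver _ hmeasind hb]
  · exact (hm.comp (measurable_iff_comap_le.mpr le_rfl)).stronglyMeasurable.aestronglyMeasurable

/-- Master lemma: replace `Z` by its version against any measurable factor with
integrable product. -/
lemma version_mul (ν : Measure Ω) [IsFiniteMeasure ν]
    (X : Ω → E) (Z : Ω → ℝ)
    (hZint : Integrable Z ν) (m : E → ℝ) (hm : Measurable m)
    (hver : ∀ h : E → ℝ, Measurable h → (∃ C, ∀ x, |h x| ≤ C) →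
      ∫ ω, Z ω * h (X ω) ∂ν = ∫ ω, m (X ω) * h (X ω) ∂ν)
    (hX : Measurable X) (f : E → ℝ) (hf : Measurable f)
    (hZf : Integrable (fun ω => Z ω * f (X ω)) ν) :
    Integrable (fun ω => m (X ω) * f (X ω)) ν ∧
      ∫ ω, Z ω * f (X ω) ∂ν = ∫ ω, m (X ω) * f (X ω) ∂ν := by
  have hle : MeasurableSpace.comap X inferInstance ≤ ‹MeasurableSpace Ω› := hX.comap_le
  have hsf : SigmaFinite (ν.trim hle) := by
    have : IsFiniteMeasure (ν.trim hle) := ⟨by rw [trim_measurableSet_eq hle MeasurableSet.univ]; exact measure_lt_top ν _⟩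
    infer_instance
  have h1 : (fun ω => m (X ω)) =ᵐ[ν] ν[Z | MeasurableSpace.comap X inferInstance] :=
    version_ae_condexp ν X Z hZint m hm hver hX
  have hfXsm : StronglyMeasurable[MeasurableSpace.comap X inferInstance] fun ω => f (X ω) :=
    (hf.comp (measurable_iff_comap_le.mpr le_rfl)).stronglyMeasurable
  have h2 : ν[(fun ω => f (X ω)) * Z | MeasurableSpace.comap X inferInstance] =ᵐ[ν] (fun ω => f (X ω)) * ν[Z | MeasurableSpace.comap X inferInstance] :=
    condExp_mul_of_stronglyMeasurable_left hfXsm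
      (hZf.congr (Filter.Eventually.of_forall fun ω => mul_comm _ _)) hZint
  have h3 : (fun ω => m (X ω) * f (X ω)) =ᵐ[ν] ν[(fun ω => f (X ω)) * Z | MeasurableSpace.comap X inferInstance] := by
    filter_upwards [h1, h2] with ω h1ω h2ω
    simp only [Pi.mul_apply] at h2ω ⊢
    rw [h2ω, ← h1ω, mul_comm]
  constructor
  · exact integrable_condExp.congr h3.symm
  · calc ∫ ω, Z ω * f (X ω) ∂ν = ∫ ω, ((fun ω => f (X ω)) * Z) ω ∂ν :=
          integral_congr_ae (Filter.Eventually.of_forall fun ω => by simp [mul_comm])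
      _ = ∫ ω, (ν[(fun ω => f (X ω)) * Z | MeasurableSpace.comap X inferInstance]) ω ∂ν := (integral_condExp hle).symm
      _ = ∫ ω, m (X ω) * f (X ω) ∂ν := integral_congr_ae h3.symm

end Aux

/-- Alternative identification formulas for Scenario 1 (Supplement B).  Under (A1)–(A6),
with `τ = (1−g)/g`, each of the following equals `E[Y¹ ∣ S = 0]`:
(i) `E[(μ₁₁(X)/μ₁₀(X))·m₀(X) ∣ S = 0]`;
(ii) `P(S=0)⁻¹·E[τ(X)·(m₀(X)/μ₁₀(X))·S·A·Y/q(X)]`;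
(iii) `P(S=0)⁻¹·E[(μ₁₁(X)/μ₁₀(X))·(m₀(X)/μ₁₀(X))·τ(X)·S·(1−A)·Y/(1−q(X))]`. -/
theorem alternative_identification_scenario1
    {Ω E : Type*} [MeasurableSpace Ω] [MeasurableSpace E]
    (P : Measure Ω) [IsProbabilityMeasure P]
    (X : Ω → E) (S A Y Y0 Y1 : Ω → ℝ)
    (hX : Measurable X) (hS : Measurable S) (hA : Measurable A) (hY : Measurable Y)
    (hS01 : ∀ ω, S ω = 0 ∨ S ω = 1) (hA01 : ∀ ω, A ω = 0 ∨ A ω = 1)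
    (hPS0 : 0 < P {ω | S ω = 0})
    (hPS1A1 : 0 < P {ω | S ω = 1 ∧ A ω = 1})
    (hPS1A0 : 0 < P {ω | S ω = 1 ∧ A ω = 0})
    (hYint : Integrable Y P) (hY0int : Integrable Y0 P) (hY1int : Integrable Y1 P)
    (g q μ11 μ10 ρ0 ρ1 m0 : E → ℝ)
    (hg : IsVersion P X S Set.univ g)
    (hg01 : ∀ᵐ ω ∂P, 0 < g (X ω) ∧ g (X ω) < 1)
    (hq : IsVersion P X A {ω | S ω = 1} q)
    -- m₀ is a version of E[Y ∣ X; S = 0]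
    (hm0 : IsVersion P X Y {ω | S ω = 0} m0)
    -- (A1)
    (hA1 : ∀ᵐ ω ∂P, Y ω = A ω * Y1 ω + (1 - A ω) * Y0 ω)
    -- (A2)
    (hμ11obs : IsVersion P X Y {ω | S ω = 1 ∧ A ω = 1} μ11)
    (hμ11cf : IsVersion P X Y1 {ω | S ω = 1} μ11)
    (hμ10obs : IsVersion P X Y {ω | S ω = 1 ∧ A ω = 0} μ10)
    (hμ10cf : IsVersion P X Y0 {ω | S ω = 1} μ10)
    -- (A3)
    (hA3 : ∀ᵐ ω ∂P, S ω = 1 → 0 < q (X ω) ∧ q (X ω) < 1)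
    -- (A4)
    (hρ0 : IsVersion P X Y0 {ω | S ω = 0} ρ0)
    (hρ1 : IsVersion P X Y1 {ω | S ω = 0} ρ1)
    (hA4 : ∀ᵐ ω ∂P, S ω = 0 →
      μ10 (X ω) ≠ 0 ∧ ρ0 (X ω) ≠ 0 ∧
        μ11 (X ω) / μ10 (X ω) = ρ1 (X ω) / ρ0 (X ω))
    -- (A5)
    (hA5 : ∀ᵐ ω ∂P, 0 < g (X ω))
    -- (A6)
    (hA6 : ∀ᵐ ω ∂P, S ω = 0 → A ω = 0)
    -- integrability of the expressions inside the expectations below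
    (hint1 : Integrable (fun ω => μ11 (X ω) / μ10 (X ω) * m0 (X ω)) P)
    (hint2 : Integrable (fun ω =>
      (1 - g (X ω)) / g (X ω) * (m0 (X ω) / μ10 (X ω)) * (S ω * A ω * Y ω) / q (X ω)) P)
    (hint3 : Integrable (fun ω =>
      μ11 (X ω) / μ10 (X ω) * (m0 (X ω) / μ10 (X ω)) * ((1 - g (X ω)) / g (X ω)) *
        (S ω * (1 - A ω) * Y ω) / (1 - q (X ω))) P) :
    condMean P Y1 {ω | S ω = 0}
      = condMean P (fun ω => μ11 (X ω) / μ10 (X ω) * m0 (X ω)) {ω | S ω = 0} ∧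
    condMean P Y1 {ω | S ω = 0}
      = (P {ω | S ω = 0}).toReal⁻¹ *
          ∫ ω, (1 - g (X ω)) / g (X ω) * (m0 (X ω) / μ10 (X ω)) *
            (S ω * A ω * Y ω) / q (X ω) ∂P ∧
    condMean P Y1 {ω | S ω = 0}
      = (P {ω | S ω = 0}).toReal⁻¹ *
          ∫ ω, μ11 (X ω) / μ10 (X ω) * (m0 (X ω) / μ10 (X ω)) *
            ((1 - g (X ω)) / g (X ω)) * (S ω * (1 - A ω) * Y ω) / (1 - q (X ω)) ∂P := by
  classical
  have hgm := hg.1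
  have hqm := hq.1
  have hm0m := hm0.1
  have hμ11m := hμ11obs.1
  have hμ10m := hμ10obs.1
  have hρ0m := hρ0.1
  have hρ1m := hρ1.1
  have hB0m : MeasurableSet {ω | S ω = 0} := hS (measurableSet_singleton 0)
  have hB1m : MeasurableSet {ω | S ω = 1} := hS (measurableSet_singleton 1)
  have hB11m : MeasurableSet {ω | S ω = 1 ∧ A ω = 1} :=
    (hS (measurableSet_singleton 1)).inter (hA (measurableSet_singleton 1))
  have hB10m : MeasurableSet {ω | S ω = 1 ∧ A ω = 0} :=
    (hS (measurableSet_singleton 1)).inter (hA (measurableSet_singleton 0))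
  have hSint : Integrable S P := by
    refine Integrable.mono' (integrable_const 1) hS.aestronglyMeasurable ?_
    filter_upwards with ω
    rcases hS01 ω with h | h <;> simp [h]
  have hAint : Integrable A P := by
    refine Integrable.mono' (integrable_const 1) hA.aestronglyMeasurable ?_
    filter_upwards with ω
    rcases hA01 ω with h | h <;> simp [h]
  have h1mAint : Integrable (fun ω => 1 - A ω) P := (integrable_const 1).sub hAint
  have hφm : Measurable fun x => μ11 x / μ10 x * m0 x := (hμ11m.div hμ10m).mul hm0m
  have hψm : Measurable fun x => (1 - g x) / g x * (μ11 x / μ10 x * m0 x) :=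
    ((measurable_const.sub hgm).div hgm).mul hφm
  have hf2m : Measurable fun x => (1 - g x) / g x * (m0 x / μ10 x) / q x :=
    (((measurable_const.sub hgm).div hgm).mul (hm0m.div hμ10m)).div hqm
  have hk2m : Measurable fun x => μ11 x * ((1 - g x) / g x * (m0 x / μ10 x) / q x) :=
    hμ11m.mul hf2m
  have hf3m : Measurable fun x =>
      μ11 x / μ10 x * (m0 x / μ10 x) * ((1 - g x) / g x) / (1 - q x) :=
    (((hμ11m.div hμ10m).mul (hm0m.div hμ10m)).mul ((measurable_const.sub hgm).div hgm)).div
      (measurable_const.sub hqm)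
  have hk3m : Measurable fun x =>
      μ10 x * (μ11 x / μ10 x * (m0 x / μ10 x) * ((1 - g x) / g x) / (1 - q x)) :=
    hμ10m.mul hf3m
  have hgver : ∀ h : E → ℝ, Measurable h → (∃ C, ∀ x, |h x| ≤ C) →
      ∫ ω, S ω * h (X ω) ∂P = ∫ ω, g (X ω) * h (X ω) ∂P := by
    intro h hh hb
    have := hg.2 h hh hb
    rwa [setIntegral_univ, setIntegral_univ] at this
  -- ==================== Part (i) ====================
  have hYY0 : Y =ᵐ[P.restrict {ω | S ω = 0}] Y0 := by
    filter_upwards [ae_restrict_of_ae hA1, ae_restrict_of_ae hA6,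
      ae_restrict_mem hB0m] with ω h1 h6 hmem
    have hA0 : A ω = 0 := h6 hmem
    rw [h1, hA0]; ring
  have hm0c : (fun ω => m0 (X ω)) =ᵐ[P.restrict {ω | S ω = 0}]
      (P.restrict {ω | S ω = 0})[Y | MeasurableSpace.comap X inferInstance] :=
    version_ae_condexp _ X Y hYint.restrict m0 hm0m hm0.2 hX
  have hρ0c : (fun ω => ρ0 (X ω)) =ᵐ[P.restrict {ω | S ω = 0}]
      (P.restrict {ω | S ω = 0})[Y0 | MeasurableSpace.comap X inferInstance] :=
    version_ae_condexp _ X Y0 hY0int.restrict ρ0 hρ0m hρ0.2 hX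
  have hm0ρ0 : (fun ω => m0 (X ω)) =ᵐ[P.restrict {ω | S ω = 0}] fun ω => ρ0 (X ω) :=
    hm0c.trans ((condExp_congr_ae hYY0).trans hρ0c.symm)
  have hpart1 : ∫ ω in {ω | S ω = 0}, Y1 ω ∂P
      = ∫ ω in {ω | S ω = 0}, μ11 (X ω) / μ10 (X ω) * m0 (X ω) ∂P := by
    have h1 : ∫ ω in {ω | S ω = 0}, Y1 ω ∂P = ∫ ω in {ω | S ω = 0}, ρ1 (X ω) ∂P := by
      have := hρ1.2 (fun _ => 1) measurable_const ⟨1, fun x => by norm_num⟩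
      simpa using this
    rw [h1]
    refine integral_congr_ae ?_
    filter_upwards [ae_restrict_of_ae hA4, ae_restrict_mem hB0m, hm0ρ0] with ω h4 hmem hmr
    obtain ⟨h10, hr0, heq⟩ := h4 hmem
    rw [show m0 (X ω) = ρ0 (X ω) from hmr, heq, div_mul_cancel₀ _ hr0]
  -- ==================== Part (ii) ====================
  have hpt2 : ∀ ω, (1 - g (X ω)) / g (X ω) * (m0 (X ω) / μ10 (X ω)) * (S ω * A ω * Y ω) / q (X ω)
      = Set.indicator {ω | S ω = 1 ∧ A ω = 1}
          (fun ω => Y ω * ((1 - g (X ω)) / g (X ω) * (m0 (X ω) / μ10 (X ω)) / q (X ω))) ω := by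
    intro ω
    rcases hS01 ω with hs | hs
    · have hnm : ω ∉ {ω | S ω = 1 ∧ A ω = 1} := by simp [hs]
      rw [Set.indicator_of_notMem hnm, hs]; ring
    · rcases hA01 ω with ha | ha
      · have hnm : ω ∉ {ω | S ω = 1 ∧ A ω = 1} := by simp [ha]
        rw [Set.indicator_of_notMem hnm, ha]; ring
      · have hmem : ω ∈ {ω | S ω = 1 ∧ A ω = 1} := ⟨hs, ha⟩
        rw [Set.indicator_of_mem hmem, hs, ha]; ring
  have hYf2int : Integrable
      (fun ω => Y ω * ((1 - g (X ω)) / g (X ω) * (m0 (X ω) / μ10 (X ω)) / q (X ω)))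
      (P.restrict {ω | S ω = 1 ∧ A ω = 1}) :=
    (integrable_indicator_iff hB11m).mp (hint2.congr (Filter.Eventually.of_forall hpt2))
  have M2b := version_mul (P.restrict {ω | S ω = 1 ∧ A ω = 1}) X Y hYint.restrict
    μ11 hμ11m hμ11obs.2 hX (fun x => (1 - g x) / g x * (m0 x / μ10 x) / q x) hf2m hYf2int
  have hptc2 : ∀ ω, Set.indicator {ω | S ω = 1 ∧ A ω = 1}
        (fun ω => μ11 (X ω) * ((1 - g (X ω)) / g (X ω) * (m0 (X ω) / μ10 (X ω)) / q (X ω))) ω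
      = Set.indicator {ω | S ω = 1}
        (fun ω => A ω * (μ11 (X ω) * ((1 - g (X ω)) / g (X ω) * (m0 (X ω) / μ10 (X ω)) / q (X ω)))) ω := by
    intro ω
    rcases hS01 ω with hs | hs
    · have hnm1 : ω ∉ {ω | S ω = 1 ∧ A ω = 1} := by simp [hs]
      have hnm2 : ω ∉ {ω | S ω = 1} := by simp [hs]
      rw [Set.indicator_of_notMem hnm1, Set.indicator_of_notMem hnm2]
    · rcases hA01 ω with ha | ha
      · have hnm1 : ω ∉ {ω | S ω = 1 ∧ A ω = 1} := by simp [ha]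
        have hm2 : ω ∈ {ω | S ω = 1} := hs
        rw [Set.indicator_of_notMem hnm1, Set.indicator_of_mem hm2, ha, zero_mul]
      · have hm1 : ω ∈ {ω | S ω = 1 ∧ A ω = 1} := ⟨hs, ha⟩
        have hm2 : ω ∈ {ω | S ω = 1} := hs
        rw [Set.indicator_of_mem hm1, Set.indicator_of_mem hm2, ha, one_mul]
  have hAk2int : Integrable
      (fun ω => A ω * (μ11 (X ω) * ((1 - g (X ω)) / g (X ω) * (m0 (X ω) / μ10 (X ω)) / q (X ω))))
      (P.restrict {ω | S ω = 1}) :=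
    (integrable_indicator_iff hB1m).mp
      (((integrable_indicator_iff hB11m).mpr M2b.1).congr (Filter.Eventually.of_forall hptc2))
  have M2d := version_mul (P.restrict {ω | S ω = 1}) X A hAint.restrict q hqm hq.2 hX
    (fun x => μ11 x * ((1 - g x) / g x * (m0 x / μ10 x) / q x)) hk2m hAk2int
  have hq01r : ∀ᵐ ω ∂(P.restrict {ω | S ω = 1}), 0 < q (X ω) ∧ q (X ω) < 1 := by
    filter_upwards [ae_restrict_of_ae hA3, ae_restrict_mem hB1m] with ω h3 hmem
    exact h3 hmem
  have hqk2ψ : (fun ω => q (X ω) *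
        (μ11 (X ω) * ((1 - g (X ω)) / g (X ω) * (m0 (X ω) / μ10 (X ω)) / q (X ω))))
      =ᵐ[P.restrict {ω | S ω = 1}]
      fun ω => (1 - g (X ω)) / g (X ω) * (μ11 (X ω) / μ10 (X ω) * m0 (X ω)) := by
    filter_upwards [hq01r] with ω h01
    have hqne : q (X ω) ≠ 0 := ne_of_gt h01.1
    calc q (X ω) * (μ11 (X ω) * ((1 - g (X ω)) / g (X ω) * (m0 (X ω) / μ10 (X ω)) / q (X ω)))
        = μ11 (X ω) * ((1 - g (X ω)) / g (X ω) * (m0 (X ω) / μ10 (X ω)) / q (X ω) * q (X ω)) := by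
          ring
      _ = μ11 (X ω) * ((1 - g (X ω)) / g (X ω) * (m0 (X ω) / μ10 (X ω))) := by
          rw [div_mul_cancel₀ _ hqne]
      _ = (1 - g (X ω)) / g (X ω) * (μ11 (X ω) / μ10 (X ω) * m0 (X ω)) := by ring
  have hψint1 : Integrable
      (fun ω => (1 - g (X ω)) / g (X ω) * (μ11 (X ω) / μ10 (X ω) * m0 (X ω)))
      (P.restrict {ω | S ω = 1}) := M2d.1.congr hqk2ψ
  -- shared tail: from ∫_{S=1} ψ(X) to ∫_{S=0} φ(X)
  have hptS : ∀ ω, S ω * ((1 - g (X ω)) / g (X ω) * (μ11 (X ω) / μ10 (X ω) * m0 (X ω)))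
      = Set.indicator {ω | S ω = 1}
        (fun ω => (1 - g (X ω)) / g (X ω) * (μ11 (X ω) / μ10 (X ω) * m0 (X ω))) ω := by
    intro ω
    rcases hS01 ω with hs | hs
    · have hnm : ω ∉ {ω | S ω = 1} := by simp [hs]
      rw [Set.indicator_of_notMem hnm, hs, zero_mul]
    · have hm1 : ω ∈ {ω | S ω = 1} := hs
      rw [Set.indicator_of_mem hm1, hs, one_mul]
  have hSψint : Integrable
      (fun ω => S ω * ((1 - g (X ω)) / g (X ω) * (μ11 (X ω) / μ10 (X ω) * m0 (X ω)))) P :=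
    ((integrable_indicator_iff hB1m).mpr hψint1).congr
      (Filter.Eventually.of_forall fun ω => (hptS ω).symm)
  have Mf := version_mul P X S hSint g hgm hgver hX
    (fun x => (1 - g x) / g x * (μ11 x / μ10 x * m0 x)) hψm hSψint
  have haegψ : (fun ω => g (X ω) * ((1 - g (X ω)) / g (X ω) * (μ11 (X ω) / μ10 (X ω) * m0 (X ω))))
      =ᵐ[P] fun ω => (1 - g (X ω)) * (μ11 (X ω) / μ10 (X ω) * m0 (X ω)) := by
    filter_upwards [hg01] with ω h01
    have hgne : g (X ω) ≠ 0 := ne_of_gt h01.1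
    calc g (X ω) * ((1 - g (X ω)) / g (X ω) * (μ11 (X ω) / μ10 (X ω) * m0 (X ω)))
        = (1 - g (X ω)) / g (X ω) * g (X ω) * (μ11 (X ω) / μ10 (X ω) * m0 (X ω)) := by ring
      _ = (1 - g (X ω)) * (μ11 (X ω) / μ10 (X ω) * m0 (X ω)) := by
          rw [div_mul_cancel₀ _ hgne]
  have h1mgφint : Integrable
      (fun ω => (1 - g (X ω)) * (μ11 (X ω) / μ10 (X ω) * m0 (X ω))) P := Mf.1.congr haegψ
  have hgφint : Integrable (fun ω => g (X ω) * (μ11 (X ω) / μ10 (X ω) * m0 (X ω))) P := by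
    refine (hint1.sub h1mgφint).congr (Filter.Eventually.of_forall fun ω => ?_)
    simp only [Pi.sub_apply]
    ring
  have hSφint : Integrable (fun ω => S ω * (μ11 (X ω) / μ10 (X ω) * m0 (X ω))) P := by
    refine Integrable.mono' hint1.abs (hS.mul (hφm.comp hX)).aestronglyMeasurable ?_
    filter_upwards with ω
    rw [Real.norm_eq_abs, abs_mul]
    rcases hS01 ω with h | h <;> simp [h, abs_nonneg, mul_nonneg]
  have Mf2 := version_mul P X S hSint g hgm hgver hX
    (fun x => μ11 x / μ10 x * m0 x) hφm hSφint
  have hptS0 : ∀ ω, μ11 (X ω) / μ10 (X ω) * m0 (X ω) - S ω * (μ11 (X ω) / μ10 (X ω) * m0 (X ω))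
      = Set.indicator {ω | S ω = 0} (fun ω => μ11 (X ω) / μ10 (X ω) * m0 (X ω)) ω := by
    intro ω
    rcases hS01 ω with hs | hs
    · have hm1 : ω ∈ {ω | S ω = 0} := hs
      rw [Set.indicator_of_mem hm1, hs, zero_mul, sub_zero]
    · have hnm : ω ∉ {ω | S ω = 0} := by simp [hs]
      rw [Set.indicator_of_notMem hnm, hs, one_mul, sub_self]
  have key : ∫ ω in {ω | S ω = 1}, (1 - g (X ω)) / g (X ω) * (μ11 (X ω) / μ10 (X ω) * m0 (X ω)) ∂P
      = ∫ ω in {ω | S ω = 0}, μ11 (X ω) / μ10 (X ω) * m0 (X ω) ∂P := by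
    calc ∫ ω in {ω | S ω = 1}, (1 - g (X ω)) / g (X ω) * (μ11 (X ω) / μ10 (X ω) * m0 (X ω)) ∂P
        = ∫ ω, Set.indicator {ω | S ω = 1}
            (fun ω => (1 - g (X ω)) / g (X ω) * (μ11 (X ω) / μ10 (X ω) * m0 (X ω))) ω ∂P :=
          (integral_indicator hB1m).symm
      _ = ∫ ω, S ω * ((1 - g (X ω)) / g (X ω) * (μ11 (X ω) / μ10 (X ω) * m0 (X ω))) ∂P :=
          integral_congr_ae (Filter.Eventually.of_forall fun ω => (hptS ω).symm)
      _ = ∫ ω, g (X ω) * ((1 - g (X ω)) / g (X ω) * (μ11 (X ω) / μ10 (X ω) * m0 (X ω))) ∂P :=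
          Mf.2
      _ = ∫ ω, (1 - g (X ω)) * (μ11 (X ω) / μ10 (X ω) * m0 (X ω)) ∂P :=
          integral_congr_ae haegψ
      _ = ∫ ω, (μ11 (X ω) / μ10 (X ω) * m0 (X ω)
            - g (X ω) * (μ11 (X ω) / μ10 (X ω) * m0 (X ω))) ∂P :=
          integral_congr_ae (Filter.Eventually.of_forall fun ω => by ring)
      _ = (∫ ω, μ11 (X ω) / μ10 (X ω) * m0 (X ω) ∂P)
            - ∫ ω, g (X ω) * (μ11 (X ω) / μ10 (X ω) * m0 (X ω)) ∂P :=
          integral_sub hint1 hgφint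
      _ = (∫ ω, μ11 (X ω) / μ10 (X ω) * m0 (X ω) ∂P)
            - ∫ ω, S ω * (μ11 (X ω) / μ10 (X ω) * m0 (X ω)) ∂P := by rw [Mf2.2]
      _ = ∫ ω, (μ11 (X ω) / μ10 (X ω) * m0 (X ω)
            - S ω * (μ11 (X ω) / μ10 (X ω) * m0 (X ω))) ∂P :=
          (integral_sub hint1 hSφint).symm
      _ = ∫ ω, Set.indicator {ω | S ω = 0} (fun ω => μ11 (X ω) / μ10 (X ω) * m0 (X ω)) ω ∂P :=
          integral_congr_ae (Filter.Eventually.of_forall hptS0)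
      _ = ∫ ω in {ω | S ω = 0}, μ11 (X ω) / μ10 (X ω) * m0 (X ω) ∂P := integral_indicator hB0m
  have hpart2 : ∫ ω, (1 - g (X ω)) / g (X ω) * (m0 (X ω) / μ10 (X ω)) * (S ω * A ω * Y ω) / q (X ω) ∂P
      = ∫ ω in {ω | S ω = 0}, μ11 (X ω) / μ10 (X ω) * m0 (X ω) ∂P := by
    calc ∫ ω, (1 - g (X ω)) / g (X ω) * (m0 (X ω) / μ10 (X ω)) * (S ω * A ω * Y ω) / q (X ω) ∂P
        = ∫ ω, Set.indicator {ω | S ω = 1 ∧ A ω = 1}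
            (fun ω => Y ω * ((1 - g (X ω)) / g (X ω) * (m0 (X ω) / μ10 (X ω)) / q (X ω))) ω ∂P :=
          integral_congr_ae (Filter.Eventually.of_forall hpt2)
      _ = ∫ ω in {ω | S ω = 1 ∧ A ω = 1},
            Y ω * ((1 - g (X ω)) / g (X ω) * (m0 (X ω) / μ10 (X ω)) / q (X ω)) ∂P :=
          integral_indicator hB11m
      _ = ∫ ω in {ω | S ω = 1 ∧ A ω = 1},
            μ11 (X ω) * ((1 - g (X ω)) / g (X ω) * (m0 (X ω) / μ10 (X ω)) / q (X ω)) ∂P := M2b.2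
      _ = ∫ ω, Set.indicator {ω | S ω = 1 ∧ A ω = 1}
            (fun ω => μ11 (X ω) * ((1 - g (X ω)) / g (X ω) * (m0 (X ω) / μ10 (X ω)) / q (X ω))) ω ∂P :=
          (integral_indicator hB11m).symm
      _ = ∫ ω, Set.indicator {ω | S ω = 1}
            (fun ω => A ω * (μ11 (X ω) * ((1 - g (X ω)) / g (X ω) * (m0 (X ω) / μ10 (X ω)) / q (X ω)))) ω ∂P :=
          integral_congr_ae (Filter.Eventually.of_forall hptc2)
      _ = ∫ ω in {ω | S ω = 1},
            A ω * (μ11 (X ω) * ((1 - g (X ω)) / g (X ω) * (m0 (X ω) / μ10 (X ω)) / q (X ω))) ∂P :=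
          integral_indicator hB1m
      _ = ∫ ω in {ω | S ω = 1},
            q (X ω) * (μ11 (X ω) * ((1 - g (X ω)) / g (X ω) * (m0 (X ω) / μ10 (X ω)) / q (X ω))) ∂P :=
          M2d.2
      _ = ∫ ω in {ω | S ω = 1}, (1 - g (X ω)) / g (X ω) * (μ11 (X ω) / μ10 (X ω) * m0 (X ω)) ∂P :=
          integral_congr_ae hqk2ψ
      _ = ∫ ω in {ω | S ω = 0}, μ11 (X ω) / μ10 (X ω) * m0 (X ω) ∂P := key
  -- ==================== Part (iii) ====================
  have hpt3 : ∀ ω, μ11 (X ω) / μ10 (X ω) * (m0 (X ω) / μ10 (X ω)) * ((1 - g (X ω)) / g (X ω)) *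
        (S ω * (1 - A ω) * Y ω) / (1 - q (X ω))
      = Set.indicator {ω | S ω = 1 ∧ A ω = 0}
          (fun ω => Y ω * (μ11 (X ω) / μ10 (X ω) * (m0 (X ω) / μ10 (X ω)) *
            ((1 - g (X ω)) / g (X ω)) / (1 - q (X ω)))) ω := by
    intro ω
    rcases hS01 ω with hs | hs
    · have hnm : ω ∉ {ω | S ω = 1 ∧ A ω = 0} := by simp [hs]
      rw [Set.indicator_of_notMem hnm, hs]; ring
    · rcases hA01 ω with ha | ha
      · have hmem : ω ∈ {ω | S ω = 1 ∧ A ω = 0} := ⟨hs, ha⟩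
        rw [Set.indicator_of_mem hmem, hs, ha]; ring
      · have hnm : ω ∉ {ω | S ω = 1 ∧ A ω = 0} := by simp [ha]
        rw [Set.indicator_of_notMem hnm, ha]; ring
  have hYf3int : Integrable
      (fun ω => Y ω * (μ11 (X ω) / μ10 (X ω) * (m0 (X ω) / μ10 (X ω)) *
        ((1 - g (X ω)) / g (X ω)) / (1 - q (X ω))))
      (P.restrict {ω | S ω = 1 ∧ A ω = 0}) :=
    (integrable_indicator_iff hB10m).mp (hint3.congr (Filter.Eventually.of_forall hpt3))
  have M3b := version_mul (P.restrict {ω | S ω = 1 ∧ A ω = 0}) X Y hYint.restrict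
    μ10 hμ10m hμ10obs.2 hX
    (fun x => μ11 x / μ10 x * (m0 x / μ10 x) * ((1 - g x) / g x) / (1 - q x)) hf3m hYf3int
  have hptc3 : ∀ ω, Set.indicator {ω | S ω = 1 ∧ A ω = 0}
        (fun ω => μ10 (X ω) * (μ11 (X ω) / μ10 (X ω) * (m0 (X ω) / μ10 (X ω)) *
          ((1 - g (X ω)) / g (X ω)) / (1 - q (X ω)))) ω
      = Set.indicator {ω | S ω = 1}
        (fun ω => (1 - A ω) * (μ10 (X ω) * (μ11 (X ω) / μ10 (X ω) * (m0 (X ω) / μ10 (X ω)) *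
          ((1 - g (X ω)) / g (X ω)) / (1 - q (X ω))))) ω := by
    intro ω
    rcases hS01 ω with hs | hs
    · have hnm1 : ω ∉ {ω | S ω = 1 ∧ A ω = 0} := by simp [hs]
      have hnm2 : ω ∉ {ω | S ω = 1} := by simp [hs]
      rw [Set.indicator_of_notMem hnm1, Set.indicator_of_notMem hnm2]
    · rcases hA01 ω with ha | ha
      · have hm1 : ω ∈ {ω | S ω = 1 ∧ A ω = 0} := ⟨hs, ha⟩
        have hm2 : ω ∈ {ω | S ω = 1} := hs
        rw [Set.indicator_of_mem hm1, Set.indicator_of_mem hm2, ha, sub_zero, one_mul]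
      · have hnm1 : ω ∉ {ω | S ω = 1 ∧ A ω = 0} := by simp [ha]
        have hm2 : ω ∈ {ω | S ω = 1} := hs
        rw [Set.indicator_of_notMem hnm1, Set.indicator_of_mem hm2, ha, sub_self, zero_mul]
  have h1mAk3int : Integrable
      (fun ω => (1 - A ω) * (μ10 (X ω) * (μ11 (X ω) / μ10 (X ω) * (m0 (X ω) / μ10 (X ω)) *
        ((1 - g (X ω)) / g (X ω)) / (1 - q (X ω)))))
      (P.restrict {ω | S ω = 1}) :=
    (integrable_indicator_iff hB1m).mp
      (((integrable_indicator_iff hB10m).mpr M3b.1).congr (Filter.Eventually.of_forall hptc3))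
  have hqXint : Integrable (fun ω => q (X ω)) (P.restrict {ω | S ω = 1}) :=
    version_integrable _ X A hAint.restrict q hqm hq.2 hX
  have hver1mA : ∀ h : E → ℝ, Measurable h → (∃ C, ∀ x, |h x| ≤ C) →
      ∫ ω in {ω | S ω = 1}, (1 - A ω) * h (X ω) ∂P
        = ∫ ω in {ω | S ω = 1}, (1 - q (X ω)) * h (X ω) ∂P := by
    intro h hh hb
    obtain ⟨C, hC⟩ := hb
    have hhint : Integrable (fun ω => h (X ω)) (P.restrict {ω | S ω = 1}) := by
      refine Integrable.mono' (integrable_const C) (hh.comp hX).aestronglyMeasurable ?_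
      filter_upwards with ω
      rw [Real.norm_eq_abs]
      exact hC (X ω)
    have hAhint : Integrable (fun ω => A ω * h (X ω)) (P.restrict {ω | S ω = 1}) := by
      refine Integrable.mono' (integrable_const C) (hA.mul (hh.comp hX)).aestronglyMeasurable ?_
      filter_upwards with ω
      rw [Real.norm_eq_abs, abs_mul]
      rcases hA01 ω with ha | ha
      · rw [ha, abs_zero, zero_mul]
        exact (abs_nonneg (h (X ω))).trans (hC (X ω))
      · rw [ha, abs_one, one_mul]
        exact hC (X ω)
    have hqhint : Integrable (fun ω => q (X ω) * h (X ω)) (P.restrict {ω | S ω = 1}) := by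
      refine Integrable.mono' (hqXint.abs.const_mul C)
        ((hqm.comp hX).mul (hh.comp hX)).aestronglyMeasurable ?_
      filter_upwards with ω
      rw [Real.norm_eq_abs, abs_mul, mul_comm (C : ℝ)]
      exact mul_le_mul_of_nonneg_left (hC (X ω)) (abs_nonneg _)
    calc ∫ ω in {ω | S ω = 1}, (1 - A ω) * h (X ω) ∂P
        = ∫ ω in {ω | S ω = 1}, (h (X ω) - A ω * h (X ω)) ∂P :=
          integral_congr_ae (Filter.Eventually.of_forall fun ω => by ring)
      _ = (∫ ω in {ω | S ω = 1}, h (X ω) ∂P) - ∫ ω in {ω | S ω = 1}, A ω * h (X ω) ∂P :=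
          integral_sub hhint hAhint
      _ = (∫ ω in {ω | S ω = 1}, h (X ω) ∂P) - ∫ ω in {ω | S ω = 1}, q (X ω) * h (X ω) ∂P := by
          rw [hq.2 h hh ⟨C, hC⟩]
      _ = ∫ ω in {ω | S ω = 1}, (h (X ω) - q (X ω) * h (X ω)) ∂P :=
          (integral_sub hhint hqhint).symm
      _ = ∫ ω in {ω | S ω = 1}, (1 - q (X ω)) * h (X ω) ∂P :=
          integral_congr_ae (Filter.Eventually.of_forall fun ω => by ring)
  have M3d := version_mul (P.restrict {ω | S ω = 1}) X (fun ω => 1 - A ω) h1mAint.restrict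
    (fun x => 1 - q x) (measurable_const.sub hqm) hver1mA hX
    (fun x => μ10 x * (μ11 x / μ10 x * (m0 x / μ10 x) * ((1 - g x) / g x) / (1 - q x)))
    hk3m h1mAk3int
  have hae3 : (fun ω => (1 - q (X ω)) * (μ10 (X ω) * (μ11 (X ω) / μ10 (X ω) * (m0 (X ω) / μ10 (X ω)) *
        ((1 - g (X ω)) / g (X ω)) / (1 - q (X ω)))))
      =ᵐ[P.restrict {ω | S ω = 1}]
      fun ω => (1 - g (X ω)) / g (X ω) * (μ11 (X ω) / μ10 (X ω) * m0 (X ω)) := by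
    filter_upwards [hq01r] with ω h01
    have h1mq : (1 : ℝ) - q (X ω) ≠ 0 := ne_of_gt (sub_pos.mpr h01.2)
    calc (1 - q (X ω)) * (μ10 (X ω) * (μ11 (X ω) / μ10 (X ω) * (m0 (X ω) / μ10 (X ω)) *
          ((1 - g (X ω)) / g (X ω)) / (1 - q (X ω))))
        = μ10 (X ω) * (μ11 (X ω) / μ10 (X ω) * (m0 (X ω) / μ10 (X ω)) *
            ((1 - g (X ω)) / g (X ω)) / (1 - q (X ω)) * (1 - q (X ω))) := by ring
      _ = μ10 (X ω) * (μ11 (X ω) / μ10 (X ω) * (m0 (X ω) / μ10 (X ω)) *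
            ((1 - g (X ω)) / g (X ω))) := by rw [div_mul_cancel₀ _ h1mq]
      _ = (1 - g (X ω)) / g (X ω) * (μ11 (X ω) / μ10 (X ω) * m0 (X ω)) := by
          rcases eq_or_ne (μ10 (X ω)) 0 with h | h
          · simp [h]
          · calc μ10 (X ω) * (μ11 (X ω) / μ10 (X ω) * (m0 (X ω) / μ10 (X ω)) *
                  ((1 - g (X ω)) / g (X ω)))
                = μ10 (X ω) * (μ11 (X ω) / μ10 (X ω)) *
                    (m0 (X ω) / μ10 (X ω) * ((1 - g (X ω)) / g (X ω))) := by ring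
              _ = μ11 (X ω) * (m0 (X ω) / μ10 (X ω) * ((1 - g (X ω)) / g (X ω))) := by
                  rw [mul_comm (μ10 (X ω)) (μ11 (X ω) / μ10 (X ω)), div_mul_cancel₀ _ h]
              _ = (1 - g (X ω)) / g (X ω) * (μ11 (X ω) / μ10 (X ω) * m0 (X ω)) := by ring
  have hpart3 : ∫ ω, μ11 (X ω) / μ10 (X ω) * (m0 (X ω) / μ10 (X ω)) * ((1 - g (X ω)) / g (X ω)) *
        (S ω * (1 - A ω) * Y ω) / (1 - q (X ω)) ∂P
      = ∫ ω in {ω | S ω = 0}, μ11 (X ω) / μ10 (X ω) * m0 (X ω) ∂P := by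
    calc ∫ ω, μ11 (X ω) / μ10 (X ω) * (m0 (X ω) / μ10 (X ω)) * ((1 - g (X ω)) / g (X ω)) *
          (S ω * (1 - A ω) * Y ω) / (1 - q (X ω)) ∂P
        = ∫ ω, Set.indicator {ω | S ω = 1 ∧ A ω = 0}
            (fun ω => Y ω * (μ11 (X ω) / μ10 (X ω) * (m0 (X ω) / μ10 (X ω)) *
              ((1 - g (X ω)) / g (X ω)) / (1 - q (X ω)))) ω ∂P :=
          integral_congr_ae (Filter.Eventually.of_forall hpt3)
      _ = ∫ ω in {ω | S ω = 1 ∧ A ω = 0}, Y ω * (μ11 (X ω) / μ10 (X ω) * (m0 (X ω) / μ10 (X ω)) *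
            ((1 - g (X ω)) / g (X ω)) / (1 - q (X ω))) ∂P := integral_indicator hB10m
      _ = ∫ ω in {ω | S ω = 1 ∧ A ω = 0}, μ10 (X ω) * (μ11 (X ω) / μ10 (X ω) * (m0 (X ω) / μ10 (X ω)) *
            ((1 - g (X ω)) / g (X ω)) / (1 - q (X ω))) ∂P := M3b.2
      _ = ∫ ω, Set.indicator {ω | S ω = 1 ∧ A ω = 0}
            (fun ω => μ10 (X ω) * (μ11 (X ω) / μ10 (X ω) * (m0 (X ω) / μ10 (X ω)) *
              ((1 - g (X ω)) / g (X ω)) / (1 - q (X ω)))) ω ∂P := (integral_indicator hB10m).symm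
      _ = ∫ ω, Set.indicator {ω | S ω = 1}
            (fun ω => (1 - A ω) * (μ10 (X ω) * (μ11 (X ω) / μ10 (X ω) * (m0 (X ω) / μ10 (X ω)) *
              ((1 - g (X ω)) / g (X ω)) / (1 - q (X ω))))) ω ∂P :=
          integral_congr_ae (Filter.Eventually.of_forall hptc3)
      _ = ∫ ω in {ω | S ω = 1}, (1 - A ω) * (μ10 (X ω) * (μ11 (X ω) / μ10 (X ω) * (m0 (X ω) / μ10 (X ω)) *
            ((1 - g (X ω)) / g (X ω)) / (1 - q (X ω)))) ∂P := integral_indicator hB1m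
      _ = ∫ ω in {ω | S ω = 1}, (1 - q (X ω)) * (μ10 (X ω) * (μ11 (X ω) / μ10 (X ω) * (m0 (X ω) / μ10 (X ω)) *
            ((1 - g (X ω)) / g (X ω)) / (1 - q (X ω)))) ∂P := M3d.2
      _ = ∫ ω in {ω | S ω = 1}, (1 - g (X ω)) / g (X ω) * (μ11 (X ω) / μ10 (X ω) * m0 (X ω)) ∂P :=
          integral_congr_ae hae3
      _ = ∫ ω in {ω | S ω = 0}, μ11 (X ω) / μ10 (X ω) * m0 (X ω) ∂P := key
  -- ==================== conclusion ====================
  refine ⟨?_, ?_, ?_⟩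
  · simp only [condMean]
    rw [hpart1]
  · simp only [condMean]
    rw [hpart1, ← hpart2, div_eq_inv_mul]
  · simp only [condMean]
    rw [hpart1, ← hpart3, div_eq_inv_mul]
end

section
/- Identification under the transportability condition for difference effect measures (Theorem in Supplement G): under conditions (A1), (A2), (A3), (A4*), (A5) and (A6), E[Y¹ | S = 0] = E[ μ₁₁(X) | S = 0 ] = P(S=0)⁻¹ · E[ S · τ(X) · (A/q(X)) · Y ]. -/
open MeasureTheory Filter Topology

lemma isVersion_extend {Ω E : Type*} [MeasurableSpace Ω] [MeasurableSpace E]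
    (P : Measure Ω) [IsFiniteMeasure P] (X : Ω → E) (Z : Ω → ℝ) (B : Set Ω)
    (m : E → ℝ) (hv : IsVersion P X Z B m)
    (hX : Measurable X) (hZ : Measurable Z)
    (h : E → ℝ) (hh : Measurable h)
    (hZint : Integrable (fun ω => Z ω * h (X ω)) (P.restrict B)) :
    Integrable (fun ω => m (X ω) * h (X ω)) (P.restrict B) ∧
    ∫ ω in B, Z ω * h (X ω) ∂P = ∫ ω in B, m (X ω) * h (X ω) ∂P := by
  obtain ⟨hm, hveq⟩ := hv
  set C : ℝ := ∫ ω in B, |Z ω * h (X ω)| ∂P with hC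
  -- ### Part 1: integrability of m(X)·h(X) on B
  -- test functions ψ n, with m x * ψ n x = min |m x| n * min |h x| n
  set ψ : ℕ → E → ℝ :=
    fun n x => (if m x = 0 then 0 else min |m x| (n : ℝ) / m x) * min (|h x|) (n : ℝ)
    with hψdef
  have hψmeas : ∀ n, Measurable (ψ n) := fun n =>
    (Measurable.ite (hm (measurableSet_singleton 0)) measurable_const
      ((hm.abs.min measurable_const).div hm)).mul (hh.abs.min measurable_const)
  have hψ1 : ∀ (n : ℕ) (x : E), |if m x = 0 then 0 else min |m x| (n : ℝ) / m x| ≤ 1 := by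
    intro n x
    by_cases hx : m x = 0
    · simp [hx]
    · rw [if_neg hx, abs_div]
      rw [div_le_one (abs_pos.mpr hx)]
      have : (0:ℝ) ≤ min |m x| (n : ℝ) := le_min (abs_nonneg _) (Nat.cast_nonneg n)
      rw [abs_of_nonneg this]
      exact min_le_left _ _
  have hψ2 : ∀ (n : ℕ) (x : E), |min (|h x|) (n : ℝ)| ≤ (n : ℝ) := by
    intro n x
    rw [abs_of_nonneg (le_min (abs_nonneg _) (Nat.cast_nonneg n))]
    exact min_le_right _ _
  have hψbd : ∀ (n : ℕ) (x : E), |ψ n x| ≤ (n : ℝ) := by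
    intro n x
    rw [hψdef, abs_mul]
    calc |_| * |_| ≤ 1 * (n : ℝ) :=
          mul_le_mul (hψ1 n x) (hψ2 n x) (abs_nonneg _) zero_le_one
      _ = (n : ℝ) := one_mul _
  have hψle : ∀ (n : ℕ) (x : E), |ψ n x| ≤ |h x| := by
    intro n x
    rw [hψdef, abs_mul]
    calc |_| * |_| ≤ 1 * |h x| := by
          refine mul_le_mul (hψ1 n x) ?_ (abs_nonneg _) zero_le_one
          rw [abs_of_nonneg (le_min (abs_nonneg _) (Nat.cast_nonneg n))]
          exact min_le_left _ _
      _ = |h x| := one_mul _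
  have hmψ : ∀ (n : ℕ) (x : E), m x * ψ n x = min |m x| (n : ℝ) * min (|h x|) (n : ℝ) := by
    intro n x
    by_cases hx : m x = 0
    · simp [hψdef, hx, min_eq_left (by positivity : (0:ℝ) ≤ (n:ℝ))]
    · rw [hψdef]
      simp only [if_neg hx]
      field_simp
  -- Z · ψ n (X) is integrable, dominated by |Z h(X)|
  have hZψint : ∀ (n : ℕ), Integrable (fun ω => Z ω * ψ n (X ω)) (P.restrict B) := by
    intro n
    refine hZint.mono ((hZ.mul ((hψmeas n).comp hX)).aestronglyMeasurable) ?_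
    filter_upwards with ω
    simp only [Real.norm_eq_abs, abs_mul]
    exact mul_le_mul_of_nonneg_left (hψle n (X ω)) (abs_nonneg _)
  have hFint : ∀ (n : ℕ), Integrable
      (fun ω => min |m (X ω)| (n : ℝ) * min (|h (X ω)|) (n : ℝ)) (P.restrict B) := by
    intro n
    refine (integrable_const ((n : ℝ) * n)).mono'
      (((hm.comp hX).abs.min measurable_const).mul
        ((hh.comp hX).abs.min measurable_const)).aestronglyMeasurable ?_
    filter_upwards with ω
    rw [Real.norm_eq_abs, abs_mul, abs_of_nonneg (le_min (abs_nonneg (m (X ω))) (Nat.cast_nonneg n)),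
      abs_of_nonneg (le_min (abs_nonneg (h (X ω))) (Nat.cast_nonneg n))]
    exact mul_le_mul (min_le_right _ _) (min_le_right _ _)
      (le_min (abs_nonneg _) (Nat.cast_nonneg n)) (Nat.cast_nonneg n)
  have hFbound : ∀ (n : ℕ),
      ∫ ω in B, min |m (X ω)| (n : ℝ) * min (|h (X ω)|) (n : ℝ) ∂P ≤ C := by
    intro n
    have e1 : ∫ ω in B, min |m (X ω)| (n : ℝ) * min (|h (X ω)|) (n : ℝ) ∂P
        = ∫ ω in B, m (X ω) * ψ n (X ω) ∂P := by
      refine integral_congr_ae ?_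
      filter_upwards with ω
      rw [hmψ n (X ω)]
    rw [e1, ← hveq (ψ n) (hψmeas n) ⟨n, hψbd n⟩]
    calc ∫ ω in B, Z ω * ψ n (X ω) ∂P ≤ ∫ ω in B, |Z ω * h (X ω)| ∂P := by
          refine integral_mono (hZψint n) hZint.abs ?_
          intro ω
          calc Z ω * ψ n (X ω) ≤ |Z ω * ψ n (X ω)| := le_abs_self _
            _ ≤ |Z ω * h (X ω)| := by
              rw [abs_mul (Z ω) (ψ n (X ω)), abs_mul (Z ω) (h (X ω))]
              exact mul_le_mul_of_nonneg_left (hψle n (X ω)) (abs_nonneg _)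
      _ = C := rfl
  have hCnn : 0 ≤ C := integral_nonneg fun ω => abs_nonneg _
  have key : ∫⁻ ω in B, ENNReal.ofReal (|m (X ω) * h (X ω)|) ∂P ≤ ENNReal.ofReal C := by
    have h1 : ∀ ω, (⨆ n : ℕ, ENNReal.ofReal
        (min |m (X ω)| (n : ℝ) * min (|h (X ω)|) (n : ℝ)))
        = ENNReal.ofReal (|m (X ω) * h (X ω)|) := by
      intro ω
      rw [abs_mul]
      refine le_antisymm (iSup_le fun n => ENNReal.ofReal_le_ofReal
        (mul_le_mul (min_le_left _ _) (min_le_left _ _)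
          (le_min (abs_nonneg _) (Nat.cast_nonneg n)) (abs_nonneg _))) ?_
      obtain ⟨N, hN⟩ := exists_nat_ge (max |m (X ω)| |h (X ω)|)
      refine le_iSup_of_le N (le_of_eq ?_)
      rw [min_eq_left ((le_max_left _ _).trans hN), min_eq_left ((le_max_right _ _).trans hN)]
    calc ∫⁻ ω in B, ENNReal.ofReal (|m (X ω) * h (X ω)|) ∂P
        = ∫⁻ ω in B, ⨆ n : ℕ, ENNReal.ofReal
            (min |m (X ω)| (n : ℝ) * min (|h (X ω)|) (n : ℝ)) ∂P := by
          refine lintegral_congr fun ω => (h1 ω).symm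
      _ = ⨆ n : ℕ, ∫⁻ ω in B, ENNReal.ofReal
            (min |m (X ω)| (n : ℝ) * min (|h (X ω)|) (n : ℝ)) ∂P := by
          refine lintegral_iSup (fun n => ?_) (fun i j hij ω => ?_)
          · exact ENNReal.measurable_ofReal.comp
              (((hm.comp hX).abs.min measurable_const).mul
                ((hh.comp hX).abs.min measurable_const))
          · refine ENNReal.ofReal_le_ofReal ?_
            refine mul_le_mul (min_le_min le_rfl (Nat.cast_le.mpr hij))
              (min_le_min le_rfl (Nat.cast_le.mpr hij))
              (le_min (abs_nonneg _) (Nat.cast_nonneg i))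
              (le_min (abs_nonneg _) (Nat.cast_nonneg j))
      _ ≤ ENNReal.ofReal C := by
          refine iSup_le fun n => ?_
          rw [← ofReal_integral_eq_lintegral_ofReal (hFint n) ?_]
          · exact ENNReal.ofReal_le_ofReal (hFbound n)
          · filter_upwards with ω
            exact mul_nonneg (le_min (abs_nonneg _) (Nat.cast_nonneg n))
              (le_min (abs_nonneg _) (Nat.cast_nonneg n))
  have hmhint : Integrable (fun ω => m (X ω) * h (X ω)) (P.restrict B) := by
    refine ⟨((hm.comp hX).mul (hh.comp hX)).aestronglyMeasurable, ?_⟩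
    rw [hasFiniteIntegral_iff_norm]
    simp only [Real.norm_eq_abs]
    exact lt_of_le_of_lt key ENNReal.ofReal_lt_top
  -- ### Part 2: equality by dominated convergence with truncations of h
  set h' : ℕ → E → ℝ := fun n x => max (-(n : ℝ)) (min (n : ℝ) (h x)) with hh'def
  have hh'meas : ∀ (n : ℕ), Measurable (h' n) := fun n =>
    measurable_const.max (measurable_const.min hh)
  have hh'bd : ∀ (n : ℕ) (x : E), |h' n x| ≤ (n : ℝ) := by
    intro n x
    rw [abs_le]
    exact ⟨le_max_left _ _, max_le (neg_le_self (Nat.cast_nonneg n)) (min_le_left _ _)⟩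
  have hh'le : ∀ (n : ℕ) (x : E), |h' n x| ≤ |h x| := by
    intro n x
    rw [abs_le]
    constructor
    · exact le_max_of_le_right (le_min ((neg_nonpos.mpr (abs_nonneg _)).trans
        (Nat.cast_nonneg n)) (neg_abs_le _))
    · exact max_le ((neg_nonpos.mpr (Nat.cast_nonneg n)).trans (abs_nonneg _))
        ((min_le_right _ _).trans (le_abs_self _))
  have hh'tendsto : ∀ x : E, Tendsto (fun n : ℕ => h' n x) atTop (𝓝 (h x)) := by
    intro x
    obtain ⟨N, hN⟩ := exists_nat_ge |h x|
    refine tendsto_atTop_of_eventually_const (i₀ := N) fun n hn => ?_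
    have hn' : |h x| ≤ (n : ℝ) := hN.trans (Nat.cast_le.mpr hn)
    show max (-(n : ℝ)) (min (n : ℝ) (h x)) = h x
    rw [min_eq_right ((le_abs_self _).trans hn'),
      max_eq_right ((neg_le_neg hn').trans (neg_abs_le _))]
  have hDCT : ∀ (Z' : Ω → ℝ), Measurable Z' →
      Integrable (fun ω => Z' ω * h (X ω)) (P.restrict B) →
      Tendsto (fun n : ℕ => ∫ ω in B, Z' ω * h' n (X ω) ∂P) atTop
        (𝓝 (∫ ω in B, Z' ω * h (X ω) ∂P)) := by
    intro Z' hZ' hint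
    refine tendsto_integral_of_dominated_convergence (fun ω => |Z' ω * h (X ω)|)
      (fun n => (hZ'.mul ((hh'meas n).comp hX)).aestronglyMeasurable) hint.abs
      (fun n => ?_) ?_
    · filter_upwards with ω
      rw [Real.norm_eq_abs, abs_mul (Z' ω) (h' n (X ω)), abs_mul (Z' ω) (h (X ω))]
      exact mul_le_mul_of_nonneg_left (hh'le n (X ω)) (abs_nonneg _)
    · filter_upwards with ω
      exact (hh'tendsto (X ω)).const_mul (Z' ω)
  have t1 := hDCT Z hZ hZint
  have t2 := hDCT (fun ω => m (X ω)) (hm.comp hX) hmhint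
  have heqn : ∀ n : ℕ, ∫ ω in B, Z ω * h' n (X ω) ∂P = ∫ ω in B, m (X ω) * h' n (X ω) ∂P :=
    fun n => hveq (h' n) (hh'meas n) ⟨n, hh'bd n⟩
  exact ⟨hmhint, tendsto_nhds_unique (t1.congr heqn) t2⟩

/-- Identification under the transportability condition for difference effect measures
(Supplement G): under (A1), (A2), (A3), (A4*), (A5), (A6), with `τ = (1−g)/g`,
`E[Y¹ ∣ S = 0] = E[μ₁₁(X) ∣ S = 0] = P(S=0)⁻¹·E[S·τ(X)·(A/q(X))·Y]`. -/
theorem identification_under_A4star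
    {Ω E : Type*} [MeasurableSpace Ω] [MeasurableSpace E]
    (P : Measure Ω) [IsProbabilityMeasure P]
    (X : Ω → E) (S A Y Y0 Y1 : Ω → ℝ)
    (hX : Measurable X) (hS : Measurable S) (hA : Measurable A) (hY : Measurable Y)
    (hS01 : ∀ ω, S ω = 0 ∨ S ω = 1) (hA01 : ∀ ω, A ω = 0 ∨ A ω = 1)
    (hPS0 : 0 < P {ω | S ω = 0})
    (hPS1A1 : 0 < P {ω | S ω = 1 ∧ A ω = 1})
    (hPS1A0 : 0 < P {ω | S ω = 1 ∧ A ω = 0})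
    (hYint : Integrable Y P) (hY0int : Integrable Y0 P) (hY1int : Integrable Y1 P)
    (g q μ11 μ10 : E → ℝ)
    (hg : IsVersion P X S Set.univ g)
    (hg01 : ∀ᵐ ω ∂P, 0 < g (X ω) ∧ g (X ω) < 1)
    (hq : IsVersion P X A {ω | S ω = 1} q)
    -- (A1)
    (hA1 : ∀ᵐ ω ∂P, Y ω = A ω * Y1 ω + (1 - A ω) * Y0 ω)
    -- (A2)
    (hμ11obs : IsVersion P X Y {ω | S ω = 1 ∧ A ω = 1} μ11)
    (hμ11cf : IsVersion P X Y1 {ω | S ω = 1} μ11)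
    (hμ10obs : IsVersion P X Y {ω | S ω = 1 ∧ A ω = 0} μ10)
    (hμ10cf : IsVersion P X Y0 {ω | S ω = 1} μ10)
    -- (A3)
    (hA3 : ∀ᵐ ω ∂P, S ω = 1 → 0 < q (X ω) ∧ q (X ω) < 1)
    -- (A4*) μ₁₁ is also a version of E[Y¹ ∣ X; S = 0]
    (hA4star : IsVersion P X Y1 {ω | S ω = 0} μ11)
    -- (A5)
    (hA5 : ∀ᵐ ω ∂P, 0 < g (X ω))
    -- (A6)
    (hA6 : ∀ᵐ ω ∂P, S ω = 0 → A ω = 0)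
    -- integrability of the expressions inside the expectations below
    (hint1 : Integrable (fun ω => μ11 (X ω)) P)
    (hint2 : Integrable (fun ω =>
      S ω * ((1 - g (X ω)) / g (X ω)) * (A ω / q (X ω)) * Y ω) P) :
    condMean P Y1 {ω | S ω = 0}
      = condMean P (fun ω => μ11 (X ω)) {ω | S ω = 0} ∧
    condMean P Y1 {ω | S ω = 0}
      = (P {ω | S ω = 0}).toReal⁻¹ *
          ∫ ω, S ω * ((1 - g (X ω)) / g (X ω)) * (A ω / q (X ω)) * Y ω ∂P := by
  have hgm : Measurable g := hg.1
  have hqm : Measurable q := hq.1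
  have hμm : Measurable μ11 := hμ11obs.1
  set B0 : Set Ω := {ω | S ω = 0} with hB0def
  set B1 : Set Ω := {ω | S ω = 1} with hB1def
  set B11 : Set Ω := {ω | S ω = 1 ∧ A ω = 1} with hB11def
  have hB0 : MeasurableSet B0 := hS (measurableSet_singleton 0)
  have hB1 : MeasurableSet B1 := hS (measurableSet_singleton 1)
  have hB11 : MeasurableSet B11 :=
    (hS (measurableSet_singleton 1)).inter (hA (measurableSet_singleton 1))
  set h₁ : E → ℝ := fun x => (1 - g x) / g x * (q x)⁻¹ with hh₁def
  have hh₁m : Measurable h₁ := ((measurable_const.sub hgm).div hgm).mul hqm.inv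
  set k : E → ℝ := fun x => μ11 x * h₁ x with hkdef
  have hkm : Measurable k := hμm.mul hh₁m
  set l : E → ℝ := fun x => (1 - g x) / g x * μ11 x with hldef
  have hlm : Measurable l := ((measurable_const.sub hgm).div hgm).mul hμm
  -- Step 0: the integrand is an indicator
  have hfeq : (fun ω => S ω * ((1 - g (X ω)) / g (X ω)) * (A ω / q (X ω)) * Y ω)
      = Set.indicator B11 (fun ω => Y ω * h₁ (X ω)) := by
    funext ω
    by_cases hmem : ω ∈ B11
    · rw [Set.indicator_of_mem hmem, hmem.1, hmem.2]
      show (1 : ℝ) * _ * _ * Y ω = Y ω * ((1 - g (X ω)) / g (X ω) * (q (X ω))⁻¹)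
      ring
    · rw [Set.indicator_of_notMem hmem]
      rcases hS01 ω with hs | hs
      · rw [hs]; ring
      · rcases hA01 ω with ha | ha
        · rw [ha]; ring
        · exact absurd ⟨hs, ha⟩ hmem
  have hYh₁int : Integrable (fun ω => Y ω * h₁ (X ω)) (P.restrict B11) :=
    (integrable_indicator_iff hB11).mp (hfeq ▸ hint2)
  have hI1 : (∫ ω, S ω * ((1 - g (X ω)) / g (X ω)) * (A ω / q (X ω)) * Y ω ∂P)
      = ∫ ω in B11, Y ω * h₁ (X ω) ∂P := by
    rw [hfeq, integral_indicator hB11]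
  -- Step 1: condition on X within {S=1,A=1}
  obtain ⟨hint3, heq2⟩ := isVersion_extend P X Y B11 μ11 hμ11obs hX hY h₁ hh₁m hYh₁int
  -- Step 2: rewrite as A-weighted integral over {S=1}
  have hkeq : Set.indicator B11 (fun ω => μ11 (X ω) * h₁ (X ω))
      = Set.indicator B1 (fun ω => A ω * k (X ω)) := by
    funext ω
    by_cases h1 : ω ∈ B1
    · have hs : S ω = 1 := h1
      rw [Set.indicator_of_mem h1]
      rcases hA01 ω with ha | ha
      · rw [Set.indicator_of_notMem (fun hmem => by
          have := hmem.2; rw [ha] at this; exact one_ne_zero this.symm), ha, zero_mul]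
      · have hmem : ω ∈ B11 := ⟨hs, ha⟩
        rw [Set.indicator_of_mem hmem, ha, one_mul]
    · have : ω ∉ B11 := fun hmem => h1 hmem.1
      rw [Set.indicator_of_notMem h1, Set.indicator_of_notMem this]
  have hAkint : Integrable (fun ω => A ω * k (X ω)) (P.restrict B1) :=
    (integrable_indicator_iff hB1).mp (hkeq ▸ (integrable_indicator_iff hB11).mpr hint3)
  have hI2 : ∫ ω in B11, μ11 (X ω) * h₁ (X ω) ∂P = ∫ ω in B1, A ω * k (X ω) ∂P := by
    rw [← integral_indicator hB11, hkeq, integral_indicator hB1]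
  -- Step 3: condition on X within {S=1}, replacing A by q(X)
  obtain ⟨hint4, heq3⟩ := isVersion_extend P X A B1 q hq hX hA k hkm hAkint
  -- Step 4: simplify q(X)·k(X) = l(X) a.e. on {S=1}
  have hae1 : (fun ω => q (X ω) * k (X ω)) =ᵐ[P.restrict B1] fun ω => l (X ω) := by
    filter_upwards [ae_restrict_of_ae hA3, ae_restrict_mem hB1] with ω hq' hmem
    have hqpos : 0 < q (X ω) := (hq' hmem).1
    have hq0 : q (X ω) ≠ 0 := ne_of_gt hqpos
    calc q (X ω) * (μ11 (X ω) * ((1 - g (X ω)) / g (X ω) * (q (X ω))⁻¹))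
        = (q (X ω) * (q (X ω))⁻¹) * ((1 - g (X ω)) / g (X ω) * μ11 (X ω)) := by ring
      _ = (1 - g (X ω)) / g (X ω) * μ11 (X ω) := by rw [mul_inv_cancel₀ hq0, one_mul]
  have hlint1 : Integrable (fun ω => l (X ω)) (P.restrict B1) := hint4.congr hae1
  have hI3 : ∫ ω in B1, q (X ω) * k (X ω) ∂P = ∫ ω in B1, l (X ω) ∂P :=
    integral_congr_ae hae1
  -- Step 5: over the whole space with the S-weight
  have hleq : Set.indicator B1 (fun ω => l (X ω)) = fun ω => S ω * l (X ω) := by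
    funext ω
    rcases hS01 ω with hs | hs
    · rw [Set.indicator_of_notMem (fun hmem => by
        have : S ω = 1 := hmem; rw [hs] at this; exact zero_ne_one this), hs, zero_mul]
    · rw [Set.indicator_of_mem (show ω ∈ B1 from hs), hs, one_mul]
  have hSlint : Integrable (fun ω => S ω * l (X ω)) (P.restrict Set.univ) := by
    rw [Measure.restrict_univ, ← hleq]
    exact (integrable_indicator_iff hB1).mpr hlint1
  have hI4 : ∫ ω in B1, l (X ω) ∂P = ∫ ω in Set.univ, S ω * l (X ω) ∂P := by
    rw [← integral_indicator hB1, hleq, setIntegral_univ]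
  obtain ⟨hint5, heq4⟩ := isVersion_extend P X S Set.univ g hg hX hS l hlm hSlint
  -- Step 6: g(X)·l(X) = (1-g(X))·μ11(X) a.e.
  have hae2 : (fun ω => g (X ω) * l (X ω)) =ᵐ[P.restrict Set.univ]
      fun ω => (1 - g (X ω)) * μ11 (X ω) := by
    rw [Measure.restrict_univ]
    filter_upwards [hg01] with ω hg'
    have hg0 : g (X ω) ≠ 0 := ne_of_gt hg'.1
    calc g (X ω) * ((1 - g (X ω)) / g (X ω) * μ11 (X ω))
        = (g (X ω) * (g (X ω))⁻¹) * ((1 - g (X ω)) * μ11 (X ω)) := by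
          rw [div_eq_mul_inv]; ring
      _ = (1 - g (X ω)) * μ11 (X ω) := by rw [mul_inv_cancel₀ hg0, one_mul]
  have hglint : Integrable (fun ω => (1 - g (X ω)) * μ11 (X ω)) P := by
    have := hint5.congr hae2
    rwa [Measure.restrict_univ] at this
  have hI5 : ∫ ω in Set.univ, g (X ω) * l (X ω) ∂P
      = ∫ ω, (1 - g (X ω)) * μ11 (X ω) ∂P := by
    rw [integral_congr_ae hae2, setIntegral_univ]
  -- Step 7: E[S·μ11(X)] = E[g(X)·μ11(X)]
  have hSμint : Integrable (fun ω => S ω * μ11 (X ω)) P := by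
    refine hint1.mono ((hS.mul (hμm.comp hX)).aestronglyMeasurable) ?_
    filter_upwards with ω
    rw [Real.norm_eq_abs, Real.norm_eq_abs, abs_mul]
    rcases hS01 ω with hs | hs <;> rw [hs] <;> simp
  have hSμint' : Integrable (fun ω => S ω * μ11 (X ω)) (P.restrict Set.univ) := by
    rwa [Measure.restrict_univ]
  obtain ⟨hint6, heq5⟩ := isVersion_extend P X S Set.univ g hg hX hS μ11 hμm hSμint'
  have hgμint : Integrable (fun ω => g (X ω) * μ11 (X ω)) P := by
    rwa [Measure.restrict_univ] at hint6
  -- Step 8: the algebraic finish: ∫ (1-g)μ11 = ∫ 1_{S=0} μ11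
  have hI6 : ∫ ω, (1 - g (X ω)) * μ11 (X ω) ∂P = ∫ ω in B0, μ11 (X ω) ∂P := by
    have e1 : (fun ω => (1 - g (X ω)) * μ11 (X ω))
        = fun ω => μ11 (X ω) - g (X ω) * μ11 (X ω) := by funext ω; ring
    have e2 : (fun ω => (1 - S ω) * μ11 (X ω))
        = fun ω => μ11 (X ω) - S ω * μ11 (X ω) := by funext ω; ring
    have e3 : Set.indicator B0 (fun ω => μ11 (X ω)) = fun ω => (1 - S ω) * μ11 (X ω) := by
      funext ω
      rcases hS01 ω with hs | hs
      · rw [Set.indicator_of_mem (show ω ∈ B0 from hs), hs]; ring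
      · rw [Set.indicator_of_notMem (fun hmem => by
          have : S ω = 0 := hmem; rw [hs] at this; exact one_ne_zero this), hs]; ring
    have e4 : ∫ ω in Set.univ, S ω * μ11 (X ω) ∂P = ∫ ω, S ω * μ11 (X ω) ∂P :=
      setIntegral_univ
    have e5 : ∫ ω in Set.univ, g (X ω) * μ11 (X ω) ∂P = ∫ ω, g (X ω) * μ11 (X ω) ∂P :=
      setIntegral_univ
    rw [e1, integral_sub hint1 hgμint, ← e5, ← heq5, e4, ← integral_sub hint1 hSμint,
      ← e2, ← e3, integral_indicator hB0]
  -- Step 9: A4* with h ≡ 1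
  have hnum : ∫ ω in B0, Y1 ω ∂P = ∫ ω in B0, μ11 (X ω) ∂P := by
    have := hA4star.2 (fun _ => 1) measurable_const ⟨1, fun x => by norm_num⟩
    simpa using this
  -- Assemble the chain
  have hchain : (∫ ω, S ω * ((1 - g (X ω)) / g (X ω)) * (A ω / q (X ω)) * Y ω ∂P)
      = ∫ ω in B0, μ11 (X ω) ∂P := by
    rw [hI1, heq2, hI2, heq3, hI3, hI4, heq4, hI5, hI6]
  constructor
  · unfold condMean
    rw [hnum]
  · unfold condMean
    rw [hnum, hchain, div_eq_inv_mul]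
end

section
/- Identification of the control counterfactual mean and of the contrasts in Scenario 2 (Theorem 3): under conditions (A1) and (B1), E[Y⁰ | S = 0] = E[ μ₀₀(X) | S = 0 ]. Consequently, under conditions (A1)–(A5), (B1) and (B2), writing α₂ := E[(μ₁₁(X)/μ₁₀(X))·μ₀₀(X) | S = 0] and β₂ := E[μ₀₀(X) | S = 0], one has E[Y¹ − Y⁰ | S = 0] = α₂ − β₂, and if β₂ ≠ 0 then E[Y¹ | S = 0] / E[Y⁰ | S = 0] = α₂/β₂. -/
open MeasureTheory

/-- Theorem 3, control mean and contrasts (Scenario 2).  Under (A1) and (B1) alone,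
`E[Y⁰ ∣ S = 0] = E[μ₀₀(X) ∣ S = 0]`; consequently, under (A1)–(A5), (B1), (B2)
(the remaining conditions appear as hypotheses of the second conjunct), with
`α₂ = E[(μ₁₁(X)/μ₁₀(X))·μ₀₀(X) ∣ S = 0]` and `β₂ = E[μ₀₀(X) ∣ S = 0]`, one has
`E[Y¹ − Y⁰ ∣ S = 0] = α₂ − β₂` and, if `β₂ ≠ 0`,
`E[Y¹ ∣ S = 0] / E[Y⁰ ∣ S = 0] = α₂ / β₂`. -/
theorem control_mean_and_contrasts_scenario2
    {Ω E : Type*} [MeasurableSpace Ω] [MeasurableSpace E]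
    (P : Measure Ω) [IsProbabilityMeasure P]
    (X : Ω → E) (S A Y Y0 Y1 : Ω → ℝ)
    (hX : Measurable X) (hS : Measurable S) (hA : Measurable A) (hY : Measurable Y)
    (hS01 : ∀ ω, S ω = 0 ∨ S ω = 1) (hA01 : ∀ ω, A ω = 0 ∨ A ω = 1)
    (hPS0 : 0 < P {ω | S ω = 0})
    (hPS1A1 : 0 < P {ω | S ω = 1 ∧ A ω = 1})
    (hPS1A0 : 0 < P {ω | S ω = 1 ∧ A ω = 0})
    (hYint : Integrable Y P) (hY0int : Integrable Y0 P) (hY1int : Integrable Y1 P)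
    (g q μ11 μ10 μ00 ρ1 π : E → ℝ)
    -- integrability of the expressions inside the identifying expectations
    (hint1 : Integrable (fun ω => μ11 (X ω) / μ10 (X ω) * μ00 (X ω)) P)
    (hint2 : Integrable (fun ω => μ00 (X ω)) P)
    -- (A1) consistency
    (hA1 : ∀ᵐ ω ∂P, Y ω = A ω * Y1 ω + (1 - A ω) * Y0 ω)
    -- (B1, combined with A1)
    (hPS0A0 : 0 < P {ω | S ω = 0 ∧ A ω = 0})
    (hμ00obs : IsVersion P X Y {ω | S ω = 0 ∧ A ω = 0} μ00)
    (hμ00cf : IsVersion P X Y0 {ω | S ω = 0} μ00) :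
    -- under (A1) and (B1):
    condMean P Y0 {ω | S ω = 0} = condMean P (fun ω => μ00 (X ω)) {ω | S ω = 0} ∧
    -- under the remaining conditions (A2)–(A5) and (B2):
    (IsVersion P X S Set.univ g →
     (∀ᵐ ω ∂P, 0 < g (X ω) ∧ g (X ω) < 1) →
     IsVersion P X A {ω | S ω = 1} q →
     -- (A2)
     IsVersion P X Y {ω | S ω = 1 ∧ A ω = 1} μ11 →
     IsVersion P X Y1 {ω | S ω = 1} μ11 →
     IsVersion P X Y {ω | S ω = 1 ∧ A ω = 0} μ10 →
     IsVersion P X Y0 {ω | S ω = 1} μ10 →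
     -- (A3)
     (∀ᵐ ω ∂P, S ω = 1 → 0 < q (X ω) ∧ q (X ω) < 1) →
     -- (A4)
     IsVersion P X Y1 {ω | S ω = 0} ρ1 →
     (∀ᵐ ω ∂P, S ω = 0 →
       μ10 (X ω) ≠ 0 ∧ μ00 (X ω) ≠ 0 ∧
         μ11 (X ω) / μ10 (X ω) = ρ1 (X ω) / μ00 (X ω)) →
     -- (A5)
     (∀ᵐ ω ∂P, 0 < g (X ω)) →
     -- (B2)
     IsVersion P X (fun ω => 1 - A ω) {ω | S ω = 0} π →
     (∀ᵐ ω ∂P, S ω = 0 → 0 < π (X ω) ∧ π (X ω) < 1) →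
     (condMean P (fun ω => Y1 ω - Y0 ω) {ω | S ω = 0}
        = condMean P (fun ω => μ11 (X ω) / μ10 (X ω) * μ00 (X ω)) {ω | S ω = 0}
          - condMean P (fun ω => μ00 (X ω)) {ω | S ω = 0} ∧
      (condMean P (fun ω => μ00 (X ω)) {ω | S ω = 0} ≠ 0 →
        condMean P Y1 {ω | S ω = 0} / condMean P Y0 {ω | S ω = 0}
          = condMean P (fun ω => μ11 (X ω) / μ10 (X ω) * μ00 (X ω)) {ω | S ω = 0}
            / condMean P (fun ω => μ00 (X ω)) {ω | S ω = 0}))) := by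
  classical
  have hB0 : MeasurableSet {ω | S ω = 0} := hS (measurableSet_singleton 0)
  have h1 : ∫ ω in {ω | S ω = 0}, Y0 ω ∂P = ∫ ω in {ω | S ω = 0}, μ00 (X ω) ∂P := by
    have := hμ00cf.2 (fun _ => 1) measurable_const ⟨1, by simp⟩
    simpa using this
  constructor
  · unfold condMean; rw [h1]
  · intro hg hg01 hq hμ11obs hμ11cf hμ10obs hμ10cf hA3 hρ1 hA4 hA5 hπ hB2
    have h2 : ∫ ω in {ω | S ω = 0}, Y1 ω ∂P = ∫ ω in {ω | S ω = 0}, ρ1 (X ω) ∂P := by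
      have := hρ1.2 (fun _ => 1) measurable_const ⟨1, by simp⟩
      simpa using this
    have h3 : ∫ ω in {ω | S ω = 0}, ρ1 (X ω) ∂P
        = ∫ ω in {ω | S ω = 0}, μ11 (X ω) / μ10 (X ω) * μ00 (X ω) ∂P := by
      apply setIntegral_congr_ae hB0
      filter_upwards [hA4] with ω h hω
      obtain ⟨h10, h00, heq⟩ := h hω
      rw [heq]
      field_simp
    have hY1eq : condMean P Y1 {ω | S ω = 0}
        = condMean P (fun ω => μ11 (X ω) / μ10 (X ω) * μ00 (X ω)) {ω | S ω = 0} := by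
      unfold condMean; rw [h2, h3]
    have hY0eq : condMean P Y0 {ω | S ω = 0}
        = condMean P (fun ω => μ00 (X ω)) {ω | S ω = 0} := by
      unfold condMean; rw [h1]
    constructor
    · have hsub : ∫ ω in {ω | S ω = 0}, (Y1 ω - Y0 ω) ∂P
          = (∫ ω in {ω | S ω = 0}, Y1 ω ∂P) - ∫ ω in {ω | S ω = 0}, Y0 ω ∂P :=
        integral_sub hY1int.integrableOn hY0int.integrableOn
      unfold condMean
      rw [hsub, sub_div]
      unfold condMean at hY1eq hY0eq
      rw [hY1eq, hY0eq]
    · intro _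
      rw [hY1eq, hY0eq]
end

section
/- Identification of the treated counterfactual mean with additional confounders in the target population (Theorem S J.1, Scenario 3): under conditions (A1)–(A5), (C1) and (C2), E[Y¹ | S = 0] = E[ (μ₁₁(X)/μ₁₀(X)) · μ′₀₀(X, W) | S = 0 ] = E[ (μ₁₁(X)/μ₁₀(X)) · M(X) | S = 0 ]. -/
open MeasureTheory

open Filter in
lemma isVersion_integral_eq {Ω E : Type*} [MeasurableSpace Ω] [MeasurableSpace E]
    (P : Measure Ω) (X : Ω → E) (Z : Ω → ℝ) (B : Set Ω) (m : E → ℝ)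
    (hv : IsVersion P X Z B m) (hXm : Measurable X)
    (hZaesm : AEStronglyMeasurable Z (P.restrict B))
    (h : E → ℝ) (hh : Measurable h)
    (hZint : Integrable (fun ω => Z ω * h (X ω)) (P.restrict B))
    (hmint : Integrable (fun ω => m (X ω) * h (X ω)) (P.restrict B)) :
    ∫ ω in B, Z ω * h (X ω) ∂P = ∫ ω in B, m (X ω) * h (X ω) ∂P := by
  set hn : ℕ → E → ℝ := fun n x => max (min (h x) n) (-(n : ℝ)) with hn_def
  have hhn_meas : ∀ n, Measurable (hn n) := fun n =>
    (hh.min measurable_const).max measurable_const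
  have hhn_bdd : ∀ n, ∃ C, ∀ x, |hn n x| ≤ C := fun n =>
    ⟨n, fun x => abs_le.2 ⟨le_max_right _ _,
      max_le ((min_le_right _ _)) (neg_le_self (Nat.cast_nonneg n))⟩⟩
  have hhn_le : ∀ n x, |hn n x| ≤ |h x| := by
    intro n x
    refine abs_le.2 ⟨?_, ?_⟩
    · exact le_max_of_le_left (le_min (neg_abs_le _)
        ((neg_nonpos.2 (abs_nonneg _)).trans (Nat.cast_nonneg n)))
    · exact max_le ((min_le_left _ _).trans (le_abs_self _))
        ((neg_nonpos.2 (Nat.cast_nonneg n)).trans (abs_nonneg _))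
  have hconv : ∀ x, Tendsto (fun n : ℕ => hn n x) atTop (nhds (h x)) := by
    intro x
    refine Tendsto.congr' ?_ tendsto_const_nhds
    filter_upwards [eventually_ge_atTop ⌈|h x|⌉₊] with n hn'
    have hle : |h x| ≤ (n : ℝ) := le_trans (Nat.le_ceil _) (Nat.cast_le.2 hn')
    simp only [hn_def]
    rw [min_eq_left (le_trans (le_abs_self _) hle),
      max_eq_left (le_trans (neg_le_neg hle) (neg_abs_le _))]
  have key : ∀ n, ∫ ω in B, Z ω * hn n (X ω) ∂P = ∫ ω in B, m (X ω) * hn n (X ω) ∂P :=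
    fun n => hv.2 (hn n) (hhn_meas n) (hhn_bdd n)
  have t1 : Tendsto (fun n => ∫ ω in B, Z ω * hn n (X ω) ∂P) atTop
      (nhds (∫ ω in B, Z ω * h (X ω) ∂P)) := by
    refine tendsto_integral_of_dominated_convergence (fun ω => |Z ω * h (X ω)|)
      (fun n => hZaesm.mul ((hhn_meas n).comp hXm).aestronglyMeasurable) hZint.abs ?_ ?_
    · intro n
      filter_upwards with ω
      rw [Real.norm_eq_abs, abs_mul, abs_mul]
      exact mul_le_mul_of_nonneg_left (hhn_le n (X ω)) (abs_nonneg _)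
    · filter_upwards with ω
      exact (hconv (X ω)).const_mul _
  have t2 : Tendsto (fun n => ∫ ω in B, m (X ω) * hn n (X ω) ∂P) atTop
      (nhds (∫ ω in B, m (X ω) * h (X ω) ∂P)) := by
    refine tendsto_integral_of_dominated_convergence (fun ω => |m (X ω) * h (X ω)|)
      (fun n => ((hv.1.comp hXm).aestronglyMeasurable).mul
        ((hhn_meas n).comp hXm).aestronglyMeasurable) hmint.abs ?_ ?_
    · intro n
      filter_upwards with ω
      rw [Real.norm_eq_abs, abs_mul, abs_mul]
      exact mul_le_mul_of_nonneg_left (hhn_le n (X ω)) (abs_nonneg _)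
    · filter_upwards with ω
      exact (hconv (X ω)).const_mul _
  exact tendsto_nhds_unique (t1.congr key) t2

/-- Theorem S J.1 (Scenario 3): identification of the treated counterfactual mean with
additional confounders `W` in the target population, under (A1)–(A5), (C1), (C2):
`E[Y¹ ∣ S = 0] = E[(μ₁₁(X)/μ₁₀(X))·μ′₀₀(X,W) ∣ S = 0]
             = E[(μ₁₁(X)/μ₁₀(X))·M(X) ∣ S = 0]`. -/
theorem treated_mean_identification_scenario3
    {Ω E F : Type*} [MeasurableSpace Ω] [MeasurableSpace E] [MeasurableSpace F]
    (P : Measure Ω) [IsProbabilityMeasure P]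
    (X : Ω → E) (W : Ω → F) (S A Y Y0 Y1 : Ω → ℝ)
    (hX : Measurable X) (hW : Measurable W)
    (hS : Measurable S) (hA : Measurable A) (hY : Measurable Y)
    (hS01 : ∀ ω, S ω = 0 ∨ S ω = 1) (hA01 : ∀ ω, A ω = 0 ∨ A ω = 1)
    (hPS0 : 0 < P {ω | S ω = 0})
    (hPS1A1 : 0 < P {ω | S ω = 1 ∧ A ω = 1})
    (hPS1A0 : 0 < P {ω | S ω = 1 ∧ A ω = 0})
    (hYint : Integrable Y P) (hY0int : Integrable Y0 P) (hY1int : Integrable Y1 P)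
    (g q μ11 μ10 M ρ1 : E → ℝ) (μ00' π' : E × F → ℝ)
    (hg : IsVersion P X S Set.univ g)
    (hg01 : ∀ᵐ ω ∂P, 0 < g (X ω) ∧ g (X ω) < 1)
    (hq : IsVersion P X A {ω | S ω = 1} q)
    -- (A1)
    (hA1 : ∀ᵐ ω ∂P, Y ω = A ω * Y1 ω + (1 - A ω) * Y0 ω)
    -- (A2)
    (hμ11obs : IsVersion P X Y {ω | S ω = 1 ∧ A ω = 1} μ11)
    (hμ11cf : IsVersion P X Y1 {ω | S ω = 1} μ11)
    (hμ10obs : IsVersion P X Y {ω | S ω = 1 ∧ A ω = 0} μ10)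
    (hμ10cf : IsVersion P X Y0 {ω | S ω = 1} μ10)
    -- (A3)
    (hA3 : ∀ᵐ ω ∂P, S ω = 1 → 0 < q (X ω) ∧ q (X ω) < 1)
    -- (A5)
    (hA5 : ∀ᵐ ω ∂P, 0 < g (X ω))
    -- (C1, combined with A1)
    (hPS0A0 : 0 < P {ω | S ω = 0 ∧ A ω = 0})
    (hμ00'obs : IsVersion P (fun ω => (X ω, W ω)) Y {ω | S ω = 0 ∧ A ω = 0} μ00')
    (hμ00'cf : IsVersion P (fun ω => (X ω, W ω)) Y0 {ω | S ω = 0} μ00')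
    -- (C2)
    (hπ' : IsVersion P (fun ω => (X ω, W ω)) (fun ω => 1 - A ω) {ω | S ω = 0} π')
    (hπ'01 : ∀ᵐ ω ∂P, S ω = 0 → 0 < π' (X ω, W ω) ∧ π' (X ω, W ω) < 1)
    -- M is a version of E[μ′₀₀(X,W) ∣ X; S = 0]
    (hM : IsVersion P X (fun ω => μ00' (X ω, W ω)) {ω | S ω = 0} M)
    -- (A4), with M in the role of the control conditional mean in the target population
    (hρ1 : IsVersion P X Y1 {ω | S ω = 0} ρ1)
    (hA4 : ∀ᵐ ω ∂P, S ω = 0 →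
      μ10 (X ω) ≠ 0 ∧ M (X ω) ≠ 0 ∧
        μ11 (X ω) / μ10 (X ω) = ρ1 (X ω) / M (X ω))
    -- integrability of the expressions inside the identifying expectations
    (hint1 : Integrable (fun ω => μ11 (X ω) / μ10 (X ω) * μ00' (X ω, W ω)) P)
    (hint2 : Integrable (fun ω => μ11 (X ω) / μ10 (X ω) * M (X ω)) P) :
    condMean P Y1 {ω | S ω = 0}
      = condMean P (fun ω => μ11 (X ω) / μ10 (X ω) * μ00' (X ω, W ω)) {ω | S ω = 0} ∧
    condMean P Y1 {ω | S ω = 0}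
      = condMean P (fun ω => μ11 (X ω) / μ10 (X ω) * M (X ω)) {ω | S ω = 0} := by
  
  set B : Set Ω := {ω | S ω = 0} with hB_def
  have hBmeas : MeasurableSet B := hS (measurableSet_singleton 0)
  have hhmeas : Measurable (fun x => μ11 x / μ10 x) := hμ11obs.1.div hμ10obs.1
  -- Step 1: ∫_B Y1 = ∫_B ρ1(X)
  have step1 : ∫ ω in B, Y1 ω ∂P = ∫ ω in B, ρ1 (X ω) ∂P := by
    have := hρ1.2 (fun _ => 1) measurable_const ⟨1, fun _ => by norm_num⟩
    simpa using this
  -- Step 2: a.e. on B, ρ1(X) = (μ11/μ10)(X) * M(X)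
  have step2 : ∫ ω in B, ρ1 (X ω) ∂P
      = ∫ ω in B, μ11 (X ω) / μ10 (X ω) * M (X ω) ∂P := by
    refine setIntegral_congr_ae hBmeas ?_
    filter_upwards [hA4] with ω h4 hω
    obtain ⟨h10, hM0, heq⟩ := h4 hω
    rw [heq, div_mul_cancel₀ _ hM0]
  -- Step 3: ∫_B (μ11/μ10)(X) * M(X) = ∫_B (μ11/μ10)(X) * μ00'(X,W)
  have step3 : ∫ ω in B, μ11 (X ω) / μ10 (X ω) * μ00' (X ω, W ω) ∂P
      = ∫ ω in B, μ11 (X ω) / μ10 (X ω) * M (X ω) ∂P := by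
    have hZaesm : AEStronglyMeasurable (fun ω => μ00' (X ω, W ω)) (P.restrict B) :=
      ((hμ00'obs.1.comp (hX.prodMk hW))).aestronglyMeasurable
    have hZint : Integrable (fun ω => μ00' (X ω, W ω) * (μ11 (X ω) / μ10 (X ω)))
        (P.restrict B) := by
      have : (fun ω => μ00' (X ω, W ω) * (μ11 (X ω) / μ10 (X ω)))
          = (fun ω => μ11 (X ω) / μ10 (X ω) * μ00' (X ω, W ω)) := by
        funext ω; ring
      rw [this]; exact hint1.restrict
    have hmint : Integrable (fun ω => M (X ω) * (μ11 (X ω) / μ10 (X ω)))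
        (P.restrict B) := by
      have : (fun ω => M (X ω) * (μ11 (X ω) / μ10 (X ω)))
          = (fun ω => μ11 (X ω) / μ10 (X ω) * M (X ω)) := by
        funext ω; ring
      rw [this]; exact hint2.restrict
    have := isVersion_integral_eq P X (fun ω => μ00' (X ω, W ω)) B M hM hX hZaesm
      (fun x => μ11 x / μ10 x) hhmeas hZint hmint
    calc ∫ ω in B, μ11 (X ω) / μ10 (X ω) * μ00' (X ω, W ω) ∂P
        = ∫ ω in B, μ00' (X ω, W ω) * (μ11 (X ω) / μ10 (X ω)) ∂P := by
          congr 1; funext ω; ring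
      _ = ∫ ω in B, M (X ω) * (μ11 (X ω) / μ10 (X ω)) ∂P := this
      _ = ∫ ω in B, μ11 (X ω) / μ10 (X ω) * M (X ω) ∂P := by
          congr 1; funext ω; ring
  constructor
  · unfold condMean
    congr 1
    rw [step1, step2, ← step3]
  · unfold condMean
    congr 1
    rw [step1, step2]
end
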